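/- arXiv:2304.00430 — 6 statements merged into one kernel-verified Lean document; each statement's English description precedes it below -/
import Mathlib

section
/- Let G be a reflexive graph and suppose that an edge vv' of G avoids every edge of a walk u_0 u_1 … u_t in G, where t ≥ 1. If neither {u_0, u_1, v, v'} nor {u_{t-1}, u_t, v, v'} induces a C4 in G, then for any x ∈ {v, v'} and any y ∈ {v, v'}, (u_0, x) ~ (u_t, y). -/
/-!
Common definitions.  A reflexive graph on a finite vertex type `V` is given by a
symmetric, reflexive adjacency relation `adj : V → V → Prop`; the edge set consists
of all pairs (including loops `v v`) with `adj u v`.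
-/

variable {V : Type*}

/-- `G` is a strong cocomparability graph: there is a linear (strict total) order on the
vertices such that the correspondingly ordered adjacency matrix contains no `Slash`
submatrix (rows `01`, `10`). -/
def IsStrongCocomp (adj : V → V → Prop) : Prop :=
  ∃ lt : V → V → Prop, IsStrictTotalOrder V lt ∧
    ∀ u v x y : V, lt u v → lt x y →
      ¬(¬ adj u x ∧ adj u y ∧ adj v x ∧ ¬ adj v y)

/-- `G` is a cocomparability graph: it has a cocomparability ordering. -/
def IsCocomp (adj : V → V → Prop) : Prop :=
  ∃ lt : V → V → Prop, IsStrictTotalOrder V lt ∧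
    ∀ x y z : V, lt x y → lt y z → adj x z → adj x y ∨ adj y z

/-- `(u,v)` forces `(u',v')`:  either the pairs are equal, or `uu', vv'` are edges and
`uv', vu'` are non-edges. -/
def Forces (adj : V → V → Prop) (p q : V × V) : Prop :=
  p = q ∨ (adj p.1 q.1 ∧ adj p.2 q.2 ∧ ¬ adj p.1 q.2 ∧ ¬ adj p.2 q.1)

/-- `(u,v)` implies `(u',v')`: there are walks `u_0 … u_k` and `v_0 … v_k` (on pairs of
distinct vertices) with `(u_0,v_0) = (u,v)`, `(u_k,v_k) = (u',v')` and each pair forcing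
the next. -/
def ImpliesRel (adj : V → V → Prop) (p q : V × V) : Prop :=
  ∃ (k : ℕ) (u v : ℕ → V),
    (u 0, v 0) = p ∧ (u k, v k) = q ∧
    (∀ i < k, adj (u i) (u (i+1))) ∧
    (∀ i < k, adj (v i) (v (i+1))) ∧
    (∀ i ≤ k, u i ≠ v i) ∧
    (∀ i < k, Forces adj (u i, v i) (u (i+1), v (i+1)))

/-- An invertible pair: distinct vertices `u, v` with `(u,v) ~ (v,u)`. -/
def InvertiblePair (adj : V → V → Prop) (u v : V) : Prop :=
  u ≠ v ∧ ImpliesRel adj (u, v) (v, u)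

/-- The ordered quadruple `a b c d` is (ignoring loops) an induced 4-cycle. -/
def IsC4 (adj : V → V → Prop) (a b c d : V) : Prop :=
  adj a b ∧ adj b c ∧ adj c d ∧ adj d a ∧ ¬ adj a c ∧ ¬ adj b d

/-- The ordered quadruple `a b c d` is (ignoring loops) an induced path on 4 vertices. -/
def IsP4 (adj : V → V → Prop) (a b c d : V) : Prop :=
  adj a b ∧ adj b c ∧ adj c d ∧ ¬ adj a c ∧ ¬ adj a d ∧ ¬ adj b d

/-- The ordered quadruple `a b c d` is (ignoring loops) an induced `2K_2`
(edges `ab` and `cd` only). -/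
def Is2K2 (adj : V → V → Prop) (a b c d : V) : Prop :=
  adj a b ∧ adj c d ∧ ¬ adj a c ∧ ¬ adj a d ∧ ¬ adj b c ∧ ¬ adj b d

/-- The four vertices `a, b, c, d` are distinct and the set `{a,b,c,d}` induces a `C4`. -/
def InducesC4 (adj : V → V → Prop) (a b c d : V) : Prop :=
  [a, b, c, d].Nodup ∧
    ∃ p q r s : V, ({p, q, r, s} : Set V) = {a, b, c, d} ∧ IsC4 adj p q r s

/-- The four vertices `a, b, c, d` are distinct and the set `{a,b,c,d}` induces a `P4`. -/
def InducesP4 (adj : V → V → Prop) (a b c d : V) : Prop :=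
  [a, b, c, d].Nodup ∧
    ∃ p q r s : V, ({p, q, r, s} : Set V) = {a, b, c, d} ∧ IsP4 adj p q r s

/-- The four vertices `a, b, c, d` are distinct and the set `{a,b,c,d}` induces a `2K2`. -/
def Induces2K2 (adj : V → V → Prop) (a b c d : V) : Prop :=
  [a, b, c, d].Nodup ∧
    ∃ p q r s : V, ({p, q, r, s} : Set V) = {a, b, c, d} ∧ Is2K2 adj p q r s

/-- The edge `uu'` avoids the edge `vv'` (both possibly loops, with
`{u,u'} ∩ {v,v'} = ∅`). -/
def Avoids (adj : V → V → Prop) (u u' v v' : V) : Prop :=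
  (u ≠ v ∧ u ≠ v' ∧ u' ≠ v ∧ u' ≠ v') ∧
  ((u = u' ∧ v = v' ∧ ¬ adj u v) ∨
   (u = u' ∧ v ≠ v' ∧ ¬ adj u v ∧ ¬ adj u v') ∨
   (u ≠ u' ∧ v = v' ∧ ¬ adj u v ∧ ¬ adj u' v) ∨
   (u ≠ u' ∧ v ≠ v' ∧
     (Induces2K2 adj u u' v v' ∨ InducesP4 adj u u' v v' ∨ InducesC4 adj u u' v v')))

/-- `w 0, w 1, …, w t` is a walk in `G`. -/
def IsWalkOn (adj : V → V → Prop) (t : ℕ) (w : ℕ → V) : Prop :=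
  ∀ i < t, adj (w i) (w (i+1))

/-- The edge `xy` avoids every edge of the walk `w 0, …, w t`. -/
def EdgeAvoidsWalk (adj : V → V → Prop) (x y : V) (t : ℕ) (w : ℕ → V) : Prop :=
  ∀ i < t, Avoids adj x y (w i) (w (i+1))

/-- A weak edge-asteroid: edges `x_i y_i`, `i ∈ ZMod (2k+1)`, such that each `x_i y_i`
avoids a walk beginning with the edge `x_{i+k} y_{i+k}` and ending with the edge
`x_{i+k+1} y_{i+k+1}`. -/
def WeakEdgeAsteroid (adj : V → V → Prop) (k : ℕ) (x y : ZMod (2*k+1) → V) : Prop :=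
  (∀ i, adj (x i) (y i)) ∧
  ∀ i : ZMod (2*k+1), ∃ (t : ℕ) (w : ℕ → V), 1 ≤ t ∧
    IsWalkOn adj t w ∧
    ((w 0 = x (i + (k : ZMod (2*k+1))) ∧ w 1 = y (i + (k : ZMod (2*k+1)))) ∨
     (w 0 = y (i + (k : ZMod (2*k+1))) ∧ w 1 = x (i + (k : ZMod (2*k+1))))) ∧
    ((w (t-1) = x (i + (k : ZMod (2*k+1)) + 1) ∧ w t = y (i + (k : ZMod (2*k+1)) + 1)) ∨
     (w (t-1) = y (i + (k : ZMod (2*k+1)) + 1) ∧ w t = x (i + (k : ZMod (2*k+1)) + 1))) ∧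
    EdgeAvoidsWalk adj (x i) (y i) t w

/-- An asteroid: vertices `x_i`, `i ∈ ZMod (2k+1)`, such that for each `i` there is a walk
connecting `x_{i+k}` and `x_{i+k+1}` containing no neighbour of `x_i`. -/
def Asteroid (adj : V → V → Prop) (k : ℕ) (x : ZMod (2*k+1) → V) : Prop :=
  ∀ i : ZMod (2*k+1), ∃ (t : ℕ) (w : ℕ → V),
    w 0 = x (i + (k : ZMod (2*k+1))) ∧ w t = x (i + (k : ZMod (2*k+1)) + 1) ∧
    IsWalkOn adj t w ∧
    ∀ j ≤ t, ¬ adj (x i) (w j)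

/-- A bigraph with biadjacency relation `A` is a cocomparability bigraph: its biadjacency
matrix has a `Slash`-free ordering. -/
def IsCocompBigraph {X Y : Type*} (A : X → Y → Prop) : Prop :=
  ∃ (ltX : X → X → Prop) (ltY : Y → Y → Prop),
    IsStrictTotalOrder X ltX ∧ IsStrictTotalOrder Y ltY ∧
    ∀ x1 x2 y1 y2, ltX x1 x2 → ltY y1 y2 →
      ¬(¬ A x1 y1 ∧ A x1 y2 ∧ A x2 y1 ∧ ¬ A x2 y2)

/-- The edge set of `G` (as unordered pairs, including loops). -/
def GEdgeSet (adj : V → V → Prop) : Set (Sym2 V) := {e | ∃ u v, e = s(u, v) ∧ adj u v}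

/-- Adjacency in the avoidance graph `G*`: two edges of `G` are adjacent iff they avoid
each other. -/
def AdjStar (adj : V → V → Prop) (e f : Sym2 V) : Prop :=
  ∃ u u' v v', e = s(u, u') ∧ f = s(v, v') ∧ Avoids adj u u' v v'

section Helpers
variable {V : Type*} {adj : V → V → Prop}

lemma impliesRel_refl {p : V × V} (h : p.1 ≠ p.2) : ImpliesRel adj p p :=
  ⟨0, fun _ => p.1, fun _ => p.2, Prod.mk.eta, Prod.mk.eta,
    fun i hi => absurd hi (by omega), fun i hi => absurd hi (by omega),
    fun _ _ => h, fun i hi => absurd hi (by omega)⟩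

lemma impliesRel_snoc {p q r : V × V} (h : ImpliesRel adj p q)
    (h1 : adj q.1 r.1) (h2 : adj q.2 r.2) (h3 : r.1 ≠ r.2)
    (hf : Forces adj q r) : ImpliesRel adj p r := by
  obtain ⟨k, u, v, h0, hk, hwu, hwv, hne, hfs⟩ := h
  have hu : u k = q.1 := by rw [← hk]
  have hv : v k = q.2 := by rw [← hk]
  refine ⟨k+1, fun n => if n ≤ k then u n else r.1, fun n => if n ≤ k then v n else r.2,
      ?_, ?_, ?_, ?_, ?_, ?_⟩
  · simpa using h0
  · simp
  · intro i hi
    by_cases hik : i < k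
    · simp only [if_pos (by omega : i ≤ k), if_pos (by omega : i + 1 ≤ k)]
      exact hwu i hik
    · have : i = k := by omega
      subst this
      simp only [if_pos le_rfl, if_neg (by omega : ¬ i + 1 ≤ i)]
      rw [hu]; exact h1
  · intro i hi
    by_cases hik : i < k
    · simp only [if_pos (by omega : i ≤ k), if_pos (by omega : i + 1 ≤ k)]
      exact hwv i hik
    · have : i = k := by omega
      subst this
      simp only [if_pos le_rfl, if_neg (by omega : ¬ i + 1 ≤ i)]
      rw [hv]; exact h2
  · intro i hi
    by_cases hik : i ≤ k
    · simp only [if_pos hik]; exact hne i hik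
    · simp only [if_neg hik]; exact h3
  · intro i hi
    by_cases hik : i < k
    · simp only [if_pos (by omega : i ≤ k), if_pos (by omega : i + 1 ≤ k)]
      exact hfs i hik
    · have : i = k := by omega
      subst this
      simp only [if_pos le_rfl, if_neg (by omega : ¬ i + 1 ≤ i)]
      rw [hu, hv]; simpa using hf

end Helpers

section Facts
variable {V : Type*} {adj : V → V → Prop}

set_option maxHeartbeats 4000000 in
lemma struct_facts (hsymm : Symmetric adj) {v v' w w' : V}
    (hvv' : adj v v') (hww' : adj w w')
    (hd1 : v ≠ v') (hd2 : w ≠ w') (hd3 : v ≠ w) (hd4 : v ≠ w') (hd5 : v' ≠ w) (hd6 : v' ≠ w')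
    (h : Induces2K2 adj v v' w w' ∨ InducesP4 adj v v' w w' ∨ InducesC4 adj v v' w w') :
    ¬(adj w v ∧ adj w v') ∧ ¬(adj w' v ∧ adj w' v') ∧
    ¬(adj w v ∧ adj w' v) ∧ ¬(adj w v' ∧ adj w' v') ∧
    (InducesC4 adj v v' w w' ∨ (¬(adj w v ∧ adj w' v') ∧ ¬(adj w v' ∧ adj w' v))) := by
  have memq : ∀ {p q r s : V}, ({p, q, r, s} : Set V) = {v, v', w, w'} →
      (v = p ∨ v = q ∨ v = r ∨ v = s) ∧ (v' = p ∨ v' = q ∨ v' = r ∨ v' = s) ∧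
      (w = p ∨ w = q ∨ w = r ∨ w = s) ∧ (w' = p ∨ w' = q ∨ w' = r ∨ w' = s) := by
    intro p q r s hset
    rw [Set.ext_iff] at hset
    refine ⟨?_, ?_, ?_, ?_⟩
    · simpa using (hset v).mpr (by simp)
    · simpa using (hset v').mpr (by simp)
    · simpa using (hset w).mpr (by simp)
    · simpa using (hset w').mpr (by simp)
  rcases h with ⟨_, p, q, r, s, hset, hstr⟩ | ⟨_, p, q, r, s, hset, hstr⟩ | hC4
  · -- 2K2
    obtain ⟨a1, a2, n1, n2, n3, n4⟩ := hstr
    have n1' := fun h => n1 (hsymm h)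
    have n2' := fun h => n2 (hsymm h)
    have n3' := fun h => n3 (hsymm h)
    have n4' := fun h => n4 (hsymm h)
    obtain ⟨hv, hv', hw, hw'⟩ := memq hset
    have key : ¬(adj w v ∧ adj w v') ∧ ¬(adj w' v ∧ adj w' v') ∧
        ¬(adj w v ∧ adj w' v) ∧ ¬(adj w v' ∧ adj w' v') ∧
        ¬(adj w v ∧ adj w' v') ∧ ¬(adj w v' ∧ adj w' v) := by
      rcases hv with rfl|rfl|rfl|rfl <;> rcases hv' with rfl|rfl|rfl|rfl <;>
       rcases hw with rfl|rfl|rfl|rfl <;> rcases hw' with rfl|rfl|rfl|rfl <;> simp_all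
    exact ⟨key.1, key.2.1, key.2.2.1, key.2.2.2.1, Or.inr ⟨key.2.2.2.2.1, key.2.2.2.2.2⟩⟩
  · -- P4
    obtain ⟨a1, a2, a3, n1, n2, n3⟩ := hstr
    have a1' := hsymm a1
    have a2' := hsymm a2
    have a3' := hsymm a3
    have n1' := fun h => n1 (hsymm h)
    have n2' := fun h => n2 (hsymm h)
    have n3' := fun h => n3 (hsymm h)
    obtain ⟨hv, hv', hw, hw'⟩ := memq hset
    have key : ¬(adj w v ∧ adj w v') ∧ ¬(adj w' v ∧ adj w' v') ∧
        ¬(adj w v ∧ adj w' v) ∧ ¬(adj w v' ∧ adj w' v') ∧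
        ¬(adj w v ∧ adj w' v') ∧ ¬(adj w v' ∧ adj w' v) := by
      rcases hv with rfl|rfl|rfl|rfl <;> rcases hv' with rfl|rfl|rfl|rfl <;>
       rcases hw with rfl|rfl|rfl|rfl <;> rcases hw' with rfl|rfl|rfl|rfl <;> simp_all
    exact ⟨key.1, key.2.1, key.2.2.1, key.2.2.2.1, Or.inr ⟨key.2.2.2.2.1, key.2.2.2.2.2⟩⟩
  · -- C4
    obtain ⟨hnd, p, q, r, s, hset, hstr⟩ := hC4
    obtain ⟨a1, a2, a3, a4, n1, n2⟩ := hstr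
    have a1' := hsymm a1
    have a2' := hsymm a2
    have a3' := hsymm a3
    have a4' := hsymm a4
    have n1' := fun h => n1 (hsymm h)
    have n2' := fun h => n2 (hsymm h)
    obtain ⟨hv, hv', hw, hw'⟩ := memq hset
    have key : ¬(adj w v ∧ adj w v') ∧ ¬(adj w' v ∧ adj w' v') ∧
        ¬(adj w v ∧ adj w' v) ∧ ¬(adj w v' ∧ adj w' v') := by
      rcases hv with rfl|rfl|rfl|rfl <;> rcases hv' with rfl|rfl|rfl|rfl <;>
       rcases hw with rfl|rfl|rfl|rfl <;> rcases hw' with rfl|rfl|rfl|rfl <;> simp_all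
    exact ⟨key.1, key.2.1, key.2.2.1, key.2.2.2,
      Or.inl ⟨hnd, p, q, r, s, hset, a1, a2, a3, a4, n1, n2⟩⟩
end Facts

section Facts2
variable {V : Type*} {adj : V → V → Prop}

lemma avoids_facts (hsymm : Symmetric adj) {v v' w w' : V}
    (hvv' : adj v v') (hww' : adj w w') (hav : Avoids adj v v' w w') :
    (w ≠ v ∧ w ≠ v' ∧ w' ≠ v ∧ w' ≠ v') ∧
    ¬(adj w v ∧ adj w v') ∧ ¬(adj w' v ∧ adj w' v') ∧
    ¬(adj w v ∧ adj w' v) ∧ ¬(adj w v' ∧ adj w' v') ∧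
    (InducesC4 adj v v' w w' ∨ (¬(adj w v ∧ adj w' v') ∧ ¬(adj w v' ∧ adj w' v))) := by
  obtain ⟨⟨d1, d2, d3, d4⟩, hc⟩ := hav
  refine ⟨⟨d1.symm, d3.symm, d2.symm, d4.symm⟩, ?_⟩
  rcases hc with ⟨hvv, hww, hn⟩ | ⟨hvv, hww, hn1, hn2⟩ | ⟨hvv, hww, hn1, hn2⟩ | ⟨hvv, hww, hstr⟩
  · have h1 : ¬ adj w v := fun h => hn (hsymm h)
    subst hvv; subst hww
    exact ⟨by tauto, by tauto, by tauto, by tauto, Or.inr ⟨by tauto, by tauto⟩⟩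
  · have h1 : ¬ adj w v := fun h => hn1 (hsymm h)
    have h2 : ¬ adj w' v := fun h => hn2 (hsymm h)
    subst hvv
    exact ⟨by tauto, by tauto, by tauto, by tauto, Or.inr ⟨by tauto, by tauto⟩⟩
  · have h1 : ¬ adj w v := fun h => hn1 (hsymm h)
    have h2 : ¬ adj w v' := fun h => hn2 (hsymm h)
    subst hww
    exact ⟨by tauto, by tauto, by tauto, by tauto, Or.inr ⟨by tauto, by tauto⟩⟩
  · exact struct_facts hsymm hvv' hww' hvv hww d1 d2 d3 d4 hstr

end Facts2

set_option maxHeartbeats 1600000 in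
/-- **Lemma (Statement 3).** If the edge `vv'` avoids the walk `u 0, u 1, …, u t` (`t ≥ 1`)
and neither `{u 0, u 1, v, v'}` nor `{u (t-1), u t, v, v'}` induces a `C4`, then for any
`x ∈ {v,v'}` and `y ∈ {v,v'}` we have `(u 0, x) ~ (u t, y)`. -/
theorem align_no_C4
    {V : Type*} [Fintype V] (adj : V → V → Prop)
    (hsymm : Symmetric adj) (hrefl : Reflexive adj)
    (v v' : V) (hedge : adj v v')
    (t : ℕ) (ht : 1 ≤ t) (u : ℕ → V)
    (hwalk : IsWalkOn adj t u)
    (havoid : EdgeAvoidsWalk adj v v' t u)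
    (h1 : ¬ InducesC4 adj (u 0) (u 1) v v')
    (h2 : ¬ InducesC4 adj (u (t-1)) (u t) v v') :
    ∀ x y : V, (x = v ∨ x = v') → (y = v ∨ y = v') →
      ImpliesRel adj (u 0, x) (u t, y) := by
  intro x y hx hy
  have memadj : ∀ a b : V, (a = v ∨ a = v') → (b = v ∨ b = v') → adj a b := by
    intro a b ha hb
    rcases ha with h | h <;> rcases hb with h' | h' <;> rw [h, h']
    exacts [hrefl v, hedge, hsymm hedge, hrefl v']
  have F := fun i (hi : i < t) => avoids_facts hsymm hedge (hwalk i hi) (havoid i hi)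
  have ht1 : t - 1 + 1 = t := by omega
  have hneq : ∀ i ≤ t, u i ≠ v ∧ u i ≠ v' := by
    intro i hi
    rcases Nat.lt_or_ge i t with h | h
    · exact ⟨(F i h).1.1, (F i h).1.2.1⟩
    · have hit : i = t := by omega
      have hF := (F (t-1) (by omega)).1
      rw [ht1] at hF
      rw [hit]
      exact ⟨hF.2.2.1, hF.2.2.2⟩
  have hne0 : ∀ i ≤ t, ∀ a : V, (a = v ∨ a = v') → u i ≠ a := by
    intro i hi a ha
    rcases ha with h | h <;> rw [h]
    exacts [(hneq i hi).1, (hneq i hi).2]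
  have nadj : ∀ i, ¬ adj (u i) v → ¬ adj (u i) v' → ∀ a : V, (a = v ∨ a = v') → ¬ adj (u i) a := by
    intro i h h' a ha
    rcases ha with h'' | h'' <;> rw [h'']
    exacts [h, h']
  have hC4swap : ∀ i < t, (i = 0 ∨ i = t - 1) → ¬ InducesC4 adj v v' (u i) (u (i+1)) := by
    intro i hi hb hC
    obtain ⟨hnd, p, q, r, s, hset, hstr⟩ := hC
    have hnd' : [u i, u (i+1), v, v'].Nodup :=
      ((List.perm_append_comm (l₁ := [v, v']) (l₂ := [u i, u (i+1)]))).nodup_iff.mp hnd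
    have hset' : ({p, q, r, s} : Set V) = {u i, u (i+1), v, v'} := by
      rw [hset]; ext z; simp; tauto
    rcases hb with rfl | rfl
    · exact h1 ⟨hnd', p, q, r, s, hset', hstr⟩
    · rw [ht1] at hnd' hset'
      exact h2 ⟨hnd', p, q, r, s, hset', hstr⟩
  have EC : ∀ i < t, (i = 0 ∨ i = t - 1) → ∀ a b : V, (a = v ∨ a = v') → (b = v ∨ b = v') →
      ¬(adj (u i) a ∧ adj (u (i+1)) b) := by
    intro i hi hb a b ha hb'
    have hF := F i hi
    have hnc := (hF.2.2.2.2.2).resolve_left (hC4swap i hi hb)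
    rcases ha with rfl | rfl <;> rcases hb' with rfl | rfl
    exacts [hF.2.2.2.1, hnc.1, hnc.2, hF.2.2.2.2.1]
  have hswap : ∀ i ≤ t, ∀ z z' : V, (z = v ∨ z = v') → (z' = v ∨ z' = v') →
      ¬ adj (u i) z → ¬ adj (u i) z' → ∀ p : V × V,
      ImpliesRel adj p (u i, z) → ImpliesRel adj p (u i, z') := by
    intro i hi z z' hz hz' hn hn' p hp
    refine impliesRel_snoc hp (hrefl _) (memadj _ _ hz hz')
      (hne0 i hi z' hz')
      (Or.inr ⟨hrefl _, memadj _ _ hz hz', hn', fun h => hn (hsymm h)⟩)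
  have hstep : ∀ i < t, ∀ z z' : V, (z = v ∨ z = v') → (z' = v ∨ z' = v') →
      ¬ adj z (u (i+1)) → ¬ adj (u i) z' → ∀ p : V × V,
      ImpliesRel adj p (u i, z) → ImpliesRel adj p (u (i+1), z') := by
    intro i hi z z' hz hz' hn hn' p hp
    refine impliesRel_snoc hp (hwalk i hi) (memadj _ _ hz hz')
      (hne0 (i+1) (by omega) z' hz')
      (Or.inr ⟨hwalk i hi, memadj _ _ hz hz', hn', hn⟩)
  have key : ∀ n, 1 ≤ n → n ≤ t → ∀ z : V, (z = v ∨ z = v') → ¬ adj (u (n-1)) z →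
      ImpliesRel adj (u 0, x) (u n, z) := by
    intro n
    induction n with
    | zero => intro h; exact absurd h (by omega)
    | succ m ih =>
      intro _ hmt z hz hnz
      simp only [Nat.add_sub_cancel] at hnz
      have hmlt : m < t := by omega
      have hrefl0 : ImpliesRel adj (u 0, x) (u 0, x) :=
        impliesRel_refl (hne0 0 (by omega) x hx)
      by_cases hb1 : adj (u (m+1)) v
      · have hb2 : ¬ adj (u (m+1)) v' := fun h => (F m hmlt).2.2.1 ⟨hb1, h⟩
        have humv : ¬ adj (u m) v := fun h => (F m hmlt).2.2.2.1 ⟨h, hb1⟩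
        rcases m.eq_zero_or_pos with rfl | hm1
        · have hu0v' : ¬ adj (u 0) v' := fun h =>
            EC 0 hmlt (Or.inl rfl) v' v (Or.inr rfl) (Or.inl rfl) ⟨h, hb1⟩
          have s1 := hswap 0 (by omega) x v' hx (Or.inr rfl)
            (nadj 0 humv hu0v' x hx) hu0v' _ hrefl0
          exact hstep 0 hmlt v' z (Or.inr rfl) hz (fun h => hb2 (hsymm h)) hnz _ s1
        · by_cases hc : adj (u (m-1)) v'
          · have hcv : ¬ adj (u (m-1)) v := fun h => (F (m-1) (by omega)).2.1 ⟨h, hc⟩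
            have humv' : ¬ adj (u m) v' := by
              have hX := (F (m-1) (by omega)).2.2.2.2.1
              rw [show m - 1 + 1 = m from by omega] at hX
              exact fun h => hX ⟨hc, h⟩
            have s1 := ih (by omega) (by omega) v (Or.inl rfl) hcv
            have s2 := hswap m (by omega) v v' (Or.inl rfl) (Or.inr rfl) humv humv' _ s1
            exact hstep m hmlt v' z (Or.inr rfl) hz (fun h => hb2 (hsymm h)) hnz _ s2
          · have s1 := ih (by omega) (by omega) v' (Or.inr rfl) hc
            exact hstep m hmlt v' z (Or.inr rfl) hz (fun h => hb2 (hsymm h)) hnz _ s1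
      · by_cases hb2 : adj (u (m+1)) v'
        · have humv' : ¬ adj (u m) v' := fun h => (F m hmlt).2.2.2.2.1 ⟨h, hb2⟩
          rcases m.eq_zero_or_pos with rfl | hm1
          · have hu0v : ¬ adj (u 0) v := fun h =>
              EC 0 hmlt (Or.inl rfl) v v' (Or.inl rfl) (Or.inr rfl) ⟨h, hb2⟩
            have s1 := hswap 0 (by omega) x v hx (Or.inl rfl)
              (nadj 0 hu0v humv' x hx) hu0v _ hrefl0
            exact hstep 0 hmlt v z (Or.inl rfl) hz (fun h => hb1 (hsymm h)) hnz _ s1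
          · by_cases hc : adj (u (m-1)) v
            · have hcv' : ¬ adj (u (m-1)) v' := fun h => (F (m-1) (by omega)).2.1 ⟨hc, h⟩
              have humv : ¬ adj (u m) v := by
                have hX := (F (m-1) (by omega)).2.2.2.1
                rw [show m - 1 + 1 = m from by omega] at hX
                exact fun h => hX ⟨hc, h⟩
              have s1 := ih (by omega) (by omega) v' (Or.inr rfl) hcv'
              have s2 := hswap m (by omega) v' v (Or.inr rfl) (Or.inl rfl) humv' humv _ s1
              exact hstep m hmlt v z (Or.inl rfl) hz (fun h => hb1 (hsymm h)) hnz _ s2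
            · have s1 := ih (by omega) (by omega) v (Or.inl rfl) hc
              exact hstep m hmlt v z (Or.inl rfl) hz (fun h => hb1 (hsymm h)) hnz _ s1
        · rcases m.eq_zero_or_pos with rfl | hm1
          · exact hstep 0 hmlt x z hx hz
              (fun h => nadj 1 hb1 hb2 x hx (hsymm h)) hnz _ hrefl0
          · by_cases hc : adj (u (m-1)) v
            · have hcv' : ¬ adj (u (m-1)) v' := fun h => (F (m-1) (by omega)).2.1 ⟨hc, h⟩
              have s1 := ih (by omega) (by omega) v' (Or.inr rfl) hcv'
              exact hstep m hmlt v' z (Or.inr rfl) hz (fun h => hb2 (hsymm h)) hnz _ s1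
            · have s1 := ih (by omega) (by omega) v (Or.inl rfl) hc
              exact hstep m hmlt v z (Or.inl rfl) hz (fun h => hb1 (hsymm h)) hnz _ s1
  have ht' : t - 1 < t := by omega
  by_cases hb1 : adj (u t) v
  · have hA : ¬ adj (u (t-1)) v := by
      have hX := EC (t-1) ht' (Or.inr rfl) v v (Or.inl rfl) (Or.inl rfl)
      rw [ht1] at hX
      exact fun h => hX ⟨h, hb1⟩
    have hB : ¬ adj (u (t-1)) v' := by
      have hX := EC (t-1) ht' (Or.inr rfl) v' v (Or.inr rfl) (Or.inl rfl)
      rw [ht1] at hX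
      exact fun h => hX ⟨h, hb1⟩
    exact key t ht le_rfl y hy (nadj (t-1) hA hB y hy)
  · by_cases hb2 : adj (u t) v'
    · have hA : ¬ adj (u (t-1)) v := by
        have hX := EC (t-1) ht' (Or.inr rfl) v v' (Or.inl rfl) (Or.inr rfl)
        rw [ht1] at hX
        exact fun h => hX ⟨h, hb2⟩
      have hB : ¬ adj (u (t-1)) v' := by
        have hX := EC (t-1) ht' (Or.inr rfl) v' v' (Or.inr rfl) (Or.inr rfl)
        rw [ht1] at hX
        exact fun h => hX ⟨h, hb2⟩
      exact key t ht le_rfl y hy (nadj (t-1) hA hB y hy)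
    · by_cases hc : adj (u (t-1)) v
      · have hcv' : ¬ adj (u (t-1)) v' := fun h => (F (t-1) ht').2.1 ⟨hc, h⟩
        have s1 := key t ht le_rfl v' (Or.inr rfl) hcv'
        exact hswap t le_rfl v' y (Or.inr rfl) hy hb2
          (nadj t hb1 hb2 y hy) _ s1
      · have s1 := key t ht le_rfl v (Or.inl rfl) hc
        exact hswap t le_rfl v y (Or.inl rfl) hy hb1
          (nadj t hb1 hb2 y hy) _ s1
end

section
/- Let G be a reflexive graph and suppose that an edge vv' of G avoids every edge of a walk u_0 u_1 … u_t in G, where t ≥ 1. If both {u_0, u_1, v, v'} and {u_{t-1}, u_t, v, v'} induce a C4 in G, then (u_0, x) ~ (u_t, y), where x is the unique vertex in {v, v'} with u_0x ∈ E(G) and y is the unique vertex in {v, v'} with u_ty ∈ E(G). -/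
/-!
Common definitions.  A reflexive graph on a finite vertex type `V` is given by a
symmetric, reflexive adjacency relation `adj : V → V → Prop`; the edge set consists
of all pairs (including loops `v v`) with `adj u v`.
-/

variable {V : Type*}

/-- Auxiliary: any four vertices carrying a pattern with the two "diagonal"
non-edges `pr`, `qs` span no triangle. -/
private lemma tri_free {V : Type*} {adj : V → V → Prop} (hsymm : Symmetric adj)
    {p q r s x y z : V} (hpr : ¬ adj p r) (hqs : ¬ adj q s)
    (hx : x = p ∨ x = q ∨ x = r ∨ x = s)
    (hy : y = p ∨ y = q ∨ y = r ∨ y = s)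
    (hz : z = p ∨ z = q ∨ z = r ∨ z = s)
    (hxy : x ≠ y) (hxz : x ≠ z) (hyz : y ≠ z) :
    ¬ (adj x y ∧ adj x z ∧ adj y z) := by
  have hrp : ¬ adj r p := fun h => hpr (hsymm h)
  have hsq : ¬ adj s q := fun h => hqs (hsymm h)
  rcases hx with rfl|rfl|rfl|rfl <;> rcases hy with rfl|rfl|rfl|rfl <;>
    rcases hz with rfl|rfl|rfl|rfl <;> tauto

/-- **Lemma (Statement 5).** If the edge `vv'` avoids the walk `u 0, u 1, …, u t` (`t ≥ 1`)
and both `{u 0, u 1, v, v'}` and `{u (t-1), u t, v, v'}` induce a `C4`, then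
`(u 0, x) ~ (u t, y)`, where `x` is the (unique) vertex of `{v,v'}` adjacent to `u 0`
and `y` is the (unique) vertex of `{v,v'}` adjacent to `u t`. -/
theorem align_C4_both
    {V : Type*} [Fintype V] (adj : V → V → Prop)
    (hsymm : Symmetric adj) (hrefl : Reflexive adj)
    (v v' : V) (hedge : adj v v')
    (t : ℕ) (ht : 1 ≤ t) (u : ℕ → V)
    (hwalk : IsWalkOn adj t u)
    (havoid : EdgeAvoidsWalk adj v v' t u)
    (h1 : InducesC4 adj (u 0) (u 1) v v')
    (h2 : InducesC4 adj (u (t-1)) (u t) v v') :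
    ∀ x y : V, (x = v ∨ x = v') → adj (u 0) x →
      (y = v ∨ y = v') → adj (u t) y →
        ImpliesRel adj (u 0, x) (u t, y) := by
  intro x y hx hux hy huy
  classical
  have hvv' : v ≠ v' := by
    have h := h1.1
    simp only [List.nodup_cons, List.mem_cons, List.mem_singleton, List.not_mem_nil,
      List.nodup_nil] at h
    tauto
  -- key combinatorial facts about each edge of the walk
  have hF : ∀ i, i < t →
      (u i ≠ v ∧ u i ≠ v' ∧ u (i+1) ≠ v ∧ u (i+1) ≠ v') ∧
      ¬(adj (u i) v ∧ adj (u i) v') ∧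
      ¬(adj (u (i+1)) v ∧ adj (u (i+1)) v') ∧
      ¬(adj (u i) v ∧ adj (u (i+1)) v) ∧
      ¬(adj (u i) v' ∧ adj (u (i+1)) v') := by
    intro i hi
    obtain ⟨⟨n1, n2, n3, n4⟩, hc⟩ := havoid i hi
    refine ⟨⟨Ne.symm n1, Ne.symm n3, Ne.symm n2, Ne.symm n4⟩, ?_⟩
    rcases hc with ⟨h', _⟩ | ⟨h', _⟩ | ⟨_, heq, hnv, hnv'⟩ | ⟨_, hne', hind⟩
    · exact absurd h' hvv'
    · exact absurd h' hvv'
    · have a1 : ¬ adj (u i) v := fun h => hnv (hsymm h)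
      have a2 : ¬ adj (u i) v' := fun h => hnv' (hsymm h)
      have a3 : ¬ adj (u (i+1)) v := by rw [← heq]; exact a1
      have a4 : ¬ adj (u (i+1)) v' := by rw [← heq]; exact a2
      tauto
    · obtain ⟨p, q, r, s, hset, hpr, hqs⟩ :
          ∃ p q r s : V, ({p, q, r, s} : Set V) = {v, v', u i, u (i+1)} ∧
            ¬ adj p r ∧ ¬ adj q s := by
        rcases hind with ⟨_, p, q, r, s, hs', hp⟩ | ⟨_, p, q, r, s, hs', hp⟩ |
          ⟨_, p, q, r, s, hs', hp⟩
        · exact ⟨p, q, r, s, hs', hp.2.2.1, hp.2.2.2.2.2⟩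
        · exact ⟨p, q, r, s, hs', hp.2.2.2.1, hp.2.2.2.2.2⟩
        · exact ⟨p, q, r, s, hs', hp.2.2.2.2.1, hp.2.2.2.2.2⟩
      have hm : ∀ w : V, w ∈ ({v, v', u i, u (i+1)} : Set V) →
          (w = p ∨ w = q ∨ w = r ∨ w = s) := by
        intro w hw
        have hw' : w ∈ ({p, q, r, s} : Set V) := by rw [hset]; exact hw
        simpa using hw'
      have mv : v = p ∨ v = q ∨ v = r ∨ v = s := hm v (by simp)
      have mv' : v' = p ∨ v' = q ∨ v' = r ∨ v' = s := hm v' (by simp)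
      have mi : u i = p ∨ u i = q ∨ u i = r ∨ u i = s := hm (u i) (by simp)
      have mi1 : u (i+1) = p ∨ u (i+1) = q ∨ u (i+1) = r ∨ u (i+1) = s :=
        hm (u (i+1)) (by simp)
      refine ⟨?_, ?_, ?_, ?_⟩
      · rintro ⟨ha, hb⟩
        exact tri_free hsymm hpr hqs mi mv mv' (Ne.symm n1) (Ne.symm n3) hvv' ⟨ha, hb, hedge⟩
      · rintro ⟨ha, hb⟩
        exact tri_free hsymm hpr hqs mi1 mv mv' (Ne.symm n2) (Ne.symm n4) hvv' ⟨ha, hb, hedge⟩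
      · rintro ⟨ha, hb⟩
        exact tri_free hsymm hpr hqs mi mi1 mv hne' (Ne.symm n1) (Ne.symm n2)
          ⟨hwalk i hi, ha, hb⟩
      · rintro ⟨ha, hb⟩
        exact tri_free hsymm hpr hqs mi mi1 mv' hne' (Ne.symm n3) (Ne.symm n4)
          ⟨hwalk i hi, ha, hb⟩
  have hFt : ¬ (adj (u t) v ∧ adj (u t) v') := by
    have h0 : t - 1 < t := by omega
    have h' := (hF (t-1) h0).2.2.1
    rwa [show t - 1 + 1 = t by omega] at h'
  have hne : ∀ i, i ≤ t → u i ≠ v ∧ u i ≠ v' := by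
    intro i hi
    rcases Nat.lt_or_ge i t with h | h
    · exact ⟨(hF i h).1.1, (hF i h).1.2.1⟩
    · have hit : i = t := le_antisymm hi h
      rw [hit]
      have h0 : t - 1 < t := by omega
      have h' := (hF (t-1) h0).1
      rw [show t - 1 + 1 = t by omega] at h'
      exact ⟨h'.2.2.1, h'.2.2.2⟩
  -- the companion sequence in {v, v'}
  let S : ℕ → V := fun n => Nat.rec x (fun j prev =>
    if j % 2 = 0 then
      (if adj (u (j / 2 + 1)) v then v' else if adj (u (j / 2 + 1)) v' then v else prev)
    else
      (if adj (u (j / 2 + 1)) v then v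
       else if adj (u (j / 2 + 1)) v' then v'
       else if adj (u (j / 2)) v then v'
       else if adj (u (j / 2)) v' then v
       else prev)) n
  have hS0 : S 0 = x := rfl
  have hstep : ∀ j, S (j + 1) =
      (if j % 2 = 0 then
        (if adj (u (j / 2 + 1)) v then v' else if adj (u (j / 2 + 1)) v' then v else S j)
      else
        (if adj (u (j / 2 + 1)) v then v
         else if adj (u (j / 2 + 1)) v' then v'
         else if adj (u (j / 2)) v then v'
         else if adj (u (j / 2)) v' then v
         else S j)) := fun j => rfl
  have hmemS : ∀ j, S j = v ∨ S j = v' := by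
    intro j
    induction j with
    | zero => rw [hS0]; exact hx
    | succ j ih => rw [hstep]; split_ifs <;> tauto
  have hpadj : ∀ a b : V, (a = v ∨ a = v') → (b = v ∨ b = v') → adj a b := by
    rintro a b (rfl | rfl) (rfl | rfl) <;>
      first | exact hrefl _ | exact hedge | exact hsymm hedge
  -- at each even position the companion is the partner (if a partner exists)
  have hA : ∀ i, i ≤ t → (adj (u i) v → S (2 * i) = v) ∧ (adj (u i) v' → S (2 * i) = v') := by
    intro i hi
    cases i with
    | zero =>
      constructor
      · intro h
        rcases hx with rfl | rfl
        · simpa using hS0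
        · exact absurd ⟨h, hux⟩ (hF 0 ht).2.1
      · intro h
        rcases hx with rfl | rfl
        · exact absurd ⟨hux, h⟩ (hF 0 ht).2.1
        · simpa using hS0
    | succ k =>
      have hk : k < t := by omega
      have e1 : 2 * (k + 1) = (2 * k + 1) + 1 := by ring
      have hd2 : (2 * k + 1) / 2 = k := by omega
      constructor
      · intro h
        rw [e1, hstep, if_neg (show ¬ (2 * k + 1) % 2 = 0 by omega), hd2, if_pos h]
      · intro h
        have hnv : ¬ adj (u (k+1)) v := fun h' => (hF k hk).2.2.1 ⟨h', h⟩
        rw [e1, hstep, if_neg (show ¬ (2 * k + 1) % 2 = 0 by omega), hd2, if_neg hnv,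
          if_pos h]
  refine ⟨2 * t, fun j => u (j / 2), S, ?_, ?_, ?_, ?_, ?_, ?_⟩
  · show (u (0 / 2), S 0) = (u 0, x)
    simp [hS0]
  · show (u (2 * t / 2), S (2 * t)) = (u t, y)
    have hyS : S (2 * t) = y := by
      have e1 : 2 * t = (2 * (t - 1) + 1) + 1 := by omega
      have hd2 : (2 * (t - 1) + 1) / 2 = t - 1 := by omega
      rw [e1, hstep, if_neg (show ¬ (2 * (t - 1) + 1) % 2 = 0 by omega), hd2,
        show t - 1 + 1 = t by omega]
      rcases hy with rfl | rfl
      · rw [if_pos huy]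
      · have hnv : ¬ adj (u t) v := fun h' => hFt ⟨h', huy⟩
        rw [if_neg hnv, if_pos huy]
    rw [show 2 * t / 2 = t by omega, hyS]
  · intro j hj
    show adj (u (j / 2)) (u ((j + 1) / 2))
    rcases Nat.mod_two_eq_zero_or_one j with h | h
    · rw [show (j + 1) / 2 = j / 2 by omega]; exact hrefl _
    · rw [show (j + 1) / 2 = j / 2 + 1 by omega]; exact hwalk (j / 2) (by omega)
  · intro j hj
    exact hpadj _ _ (hmemS j) (hmemS (j + 1))
  · intro j hj
    show u (j / 2) ≠ S j
    have hjt : j / 2 ≤ t := by omega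
    rcases hmemS j with h | h <;> rw [h]
    · exact (hne _ hjt).1
    · exact (hne _ hjt).2
  · intro j hj
    show Forces adj (u (j / 2), S j) (u ((j + 1) / 2), S (j + 1))
    rcases Nat.mod_two_eq_zero_or_one j with hpar | hpar
    · -- flip step
      have hi : j / 2 < t := by omega
      have e1 : (j + 1) / 2 = j / 2 := by omega
      have e2 : 2 * (j / 2) = j := by omega
      by_cases h1' : adj (u (j / 2)) v
      · have hsj : S j = v := by
          have h' := (hA (j / 2) (le_of_lt hi)).1 h1'
          rwa [e2] at h'
        have hn : ¬ adj (u (j / 2 + 1)) v := fun h' => (hF _ hi).2.2.2.1 ⟨h1', h'⟩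
        have hs1 : S (j + 1) = v := by
          rw [hstep, if_pos hpar, if_neg hn]
          by_cases c2 : adj (u (j / 2 + 1)) v'
          · rw [if_pos c2]
          · rw [if_neg c2]; exact hsj
        exact Or.inl (by rw [e1, hsj, hs1])
      · by_cases h2' : adj (u (j / 2)) v'
        · have hsj : S j = v' := by
            have h' := (hA (j / 2) (le_of_lt hi)).2 h2'
            rwa [e2] at h'
          have hn : ¬ adj (u (j / 2 + 1)) v' := fun h' => (hF _ hi).2.2.2.2 ⟨h2', h'⟩
          have hs1 : S (j + 1) = v' := by
            rw [hstep, if_pos hpar]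
            by_cases c1 : adj (u (j / 2 + 1)) v
            · rw [if_pos c1]
            · rw [if_neg c1, if_neg hn]; exact hsj
          exact Or.inl (by rw [e1, hsj, hs1])
        · -- no partner at u (j/2): genuine (possibly trivial) flip
          have d1 : adj (u (j / 2)) (u ((j + 1) / 2)) := by rw [e1]; exact hrefl _
          have d2 : adj (S j) (S (j + 1)) := hpadj _ _ (hmemS j) (hmemS (j + 1))
          have d3 : ¬ adj (u (j / 2)) (S (j + 1)) := by
            rcases hmemS (j + 1) with h | h
            · rw [h]; exact h1'
            · rw [h]; exact h2'
          have d4 : ¬ adj (S j) (u ((j + 1) / 2)) := by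
            rw [e1]
            rcases hmemS j with h | h
            · rw [h]; exact fun hh => h1' (hsymm hh)
            · rw [h]; exact fun hh => h2' (hsymm hh)
          exact Or.inr ⟨d1, d2, d3, d4⟩
    · -- walk step
      have hi : j / 2 < t := by omega
      have e1 : (j + 1) / 2 = j / 2 + 1 := by omega
      have hs1 : S (j + 1) =
          (if adj (u (j / 2 + 1)) v then v
           else if adj (u (j / 2 + 1)) v' then v'
           else if adj (u (j / 2)) v then v'
           else if adj (u (j / 2)) v' then v
           else S j) := by
        rw [hstep, if_neg (show ¬ j % 2 = 0 by omega)]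
      have hsj : S j = (if adj (u (j / 2 + 1)) v then v'
          else if adj (u (j / 2 + 1)) v' then v else S (j - 1)) := by
        have e2 : j = (j - 1) + 1 := by omega
        have e3 : (j - 1) / 2 = j / 2 := by omega
        conv_lhs => rw [e2]
        rw [hstep, if_pos (show (j - 1) % 2 = 0 by omega), e3]
      have d1 : adj (u (j / 2)) (u ((j + 1) / 2)) := by rw [e1]; exact hwalk _ hi
      have d2 : adj (S j) (S (j + 1)) := hpadj _ _ (hmemS j) (hmemS (j + 1))
      have d3 : ¬ adj (u (j / 2)) (S (j + 1)) := by
        by_cases c1 : adj (u (j / 2 + 1)) v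
        · rw [hs1, if_pos c1]; exact fun h => (hF _ hi).2.2.2.1 ⟨h, c1⟩
        · by_cases c2 : adj (u (j / 2 + 1)) v'
          · rw [hs1, if_neg c1, if_pos c2]; exact fun h => (hF _ hi).2.2.2.2 ⟨h, c2⟩
          · by_cases c3 : adj (u (j / 2)) v
            · rw [hs1, if_neg c1, if_neg c2, if_pos c3]
              exact fun h => (hF _ hi).2.1 ⟨c3, h⟩
            · by_cases c4 : adj (u (j / 2)) v'
              · rw [hs1, if_neg c1, if_neg c2, if_neg c3, if_pos c4]; exact c3
              · rw [hs1, if_neg c1, if_neg c2, if_neg c3, if_neg c4]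
                rcases hmemS j with h | h <;> rw [h]
                · exact c3
                · exact c4
      have d4 : ¬ adj (S j) (u ((j + 1) / 2)) := by
        rw [e1]
        by_cases c1 : adj (u (j / 2 + 1)) v
        · rw [hsj, if_pos c1]
          exact fun h => (hF _ hi).2.2.1 ⟨c1, hsymm h⟩
        · by_cases c2 : adj (u (j / 2 + 1)) v'
          · rw [hsj, if_neg c1, if_pos c2]
            exact fun h => c1 (hsymm h)
          · rcases hmemS j with h | h <;> rw [h]
            · exact fun h' => c1 (hsymm h')
            · exact fun h' => c2 (hsymm h')
      exact Or.inr ⟨d1, d2, d3, d4⟩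
end

section
/- Let G be a reflexive graph. Then G contains a weak edge-asteroid if and only if the complement of the avoidance graph G* of G (taken as a reflexive graph, with a loop at every vertex) contains an asteroid. -/
/-!
Common definitions.  A reflexive graph on a finite vertex type `V` is given by a
symmetric, reflexive adjacency relation `adj : V → V → Prop`; the edge set consists
of all pairs (including loops `v v`) with `adj u v`.
-/

variable {V : Type*}

section AuxProof
variable {V : Type*} {adj : V → V → Prop}

lemma noDominating (hsymm : Symmetric adj) {a b c d : V}
    (h : Is2K2 adj a b c d ∨ IsP4 adj a b c d ∨ IsC4 adj a b c d)
    (z : V) (hz : z ∈ ({a, b, c, d} : Set V)) :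
    ∃ w ∈ ({a, b, c, d} : Set V), ¬ adj z w := by
  simp only [Set.mem_insert_iff, Set.mem_singleton_iff] at hz ⊢
  rcases h with ⟨h1, h2, h3, h4, h5, h6⟩ | ⟨h1, h2, h3, h4, h5, h6⟩ | ⟨h1, h2, h3, h4, h5, h6⟩ <;>
    rcases hz with rfl | rfl | rfl | rfl
  · exact ⟨c, by tauto, h3⟩
  · exact ⟨c, by tauto, h5⟩
  · exact ⟨a, by tauto, fun hh => h3 (hsymm hh)⟩
  · exact ⟨a, by tauto, fun hh => h4 (hsymm hh)⟩
  · exact ⟨c, by tauto, h4⟩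
  · exact ⟨d, by tauto, h6⟩
  · exact ⟨a, by tauto, fun hh => h4 (hsymm hh)⟩
  · exact ⟨a, by tauto, fun hh => h5 (hsymm hh)⟩
  · exact ⟨c, by tauto, h5⟩
  · exact ⟨d, by tauto, h6⟩
  · exact ⟨a, by tauto, fun hh => h5 (hsymm hh)⟩
  · exact ⟨b, by tauto, fun hh => h6 (hsymm hh)⟩

lemma avoids_iff (hsymm : Symmetric adj) (hrefl : Reflexive adj)
    {p q x y : V} (hpq : adj p q) (hxy : adj x y) :
    Avoids adj p q x y ↔
      (p ≠ x ∧ p ≠ y ∧ q ≠ x ∧ q ≠ y) ∧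
      (¬(adj p x ∧ adj p y) ∧ ¬(adj q x ∧ adj q y) ∧
       ¬(adj p x ∧ adj q x) ∧ ¬(adj p y ∧ adj q y)) := by
  constructor
  · rintro ⟨hne, hc⟩
    refine ⟨hne, ?_⟩
    rcases hc with ⟨rfl, rfl, h3⟩ | ⟨rfl, h2, h3, h4⟩ | ⟨h1, rfl, h3, h4⟩ | ⟨h1, h2, h3⟩
    · tauto
    · tauto
    · tauto
    · have hI : ∃ a b c d : V, ({a, b, c, d} : Set V) = {p, q, x, y} ∧
          (Is2K2 adj a b c d ∨ IsP4 adj a b c d ∨ IsC4 adj a b c d) := by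
        rcases h3 with ⟨_, a, b, c, d, hset, hIs⟩ | ⟨_, a, b, c, d, hset, hIs⟩ |
          ⟨_, a, b, c, d, hset, hIs⟩ <;> exact ⟨a, b, c, d, hset, by tauto⟩
      obtain ⟨a, b, c, d, hset, hIs⟩ := hI
      have key : ∀ z ∈ ({p, q, x, y} : Set V), ∃ w ∈ ({p, q, x, y} : Set V), ¬ adj z w := by
        intro z hz
        rw [← hset] at hz
        obtain ⟨w, hw, hnw⟩ := noDominating hsymm hIs z hz
        exact ⟨w, hset ▸ hw, hnw⟩
      refine ⟨?_, ?_, ?_, ?_⟩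
      · rintro ⟨ha1, ha2⟩
        obtain ⟨w, hw, hnw⟩ := key p (by simp)
        simp only [Set.mem_insert_iff, Set.mem_singleton_iff] at hw
        rcases hw with h | h | h | h
        exacts [hnw (by rw [h]; exact hrefl p), hnw (by rw [h]; exact hpq),
          hnw (by rw [h]; exact ha1), hnw (by rw [h]; exact ha2)]
      · rintro ⟨ha1, ha2⟩
        obtain ⟨w, hw, hnw⟩ := key q (by simp)
        simp only [Set.mem_insert_iff, Set.mem_singleton_iff] at hw
        rcases hw with h | h | h | h
        exacts [hnw (by rw [h]; exact hsymm hpq), hnw (by rw [h]; exact hrefl q),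
          hnw (by rw [h]; exact ha1), hnw (by rw [h]; exact ha2)]
      · rintro ⟨ha1, ha2⟩
        obtain ⟨w, hw, hnw⟩ := key x (by simp)
        simp only [Set.mem_insert_iff, Set.mem_singleton_iff] at hw
        rcases hw with h | h | h | h
        exacts [hnw (by rw [h]; exact hsymm ha1), hnw (by rw [h]; exact hsymm ha2),
          hnw (by rw [h]; exact hrefl x), hnw (by rw [h]; exact hxy)]
      · rintro ⟨ha1, ha2⟩
        obtain ⟨w, hw, hnw⟩ := key y (by simp)
        simp only [Set.mem_insert_iff, Set.mem_singleton_iff] at hw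
        rcases hw with h | h | h | h
        exacts [hnw (by rw [h]; exact hsymm ha1), hnw (by rw [h]; exact hsymm ha2),
          hnw (by rw [h]; exact hsymm hxy), hnw (by rw [h]; exact hrefl y)]
  · rintro ⟨⟨h1, h2, h3, h4⟩, m1, m2, m3, m4⟩
    refine ⟨⟨h1, h2, h3, h4⟩, ?_⟩
    by_cases hpq' : p = q <;> by_cases hxy' : x = y
    · subst hpq'; subst hxy'; exact Or.inl ⟨rfl, rfl, by tauto⟩
    · subst hpq'; exact Or.inr (Or.inl ⟨rfl, hxy', by tauto, by tauto⟩)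
    · subst hxy'; exact Or.inr (Or.inr (Or.inl ⟨hpq', rfl, by tauto, by tauto⟩))
    · refine Or.inr (Or.inr (Or.inr ⟨hpq', hxy', ?_⟩))
      have hnd : [p, q, x, y].Nodup := by
        simp only [List.nodup_cons, List.mem_cons, List.not_mem_nil, or_false,
          List.mem_singleton, List.nodup_nil, and_true, not_or]
        tauto
      have hset1 : ({q, p, x, y} : Set V) = {p, q, x, y} := Set.insert_comm q p {x, y}
      have hset2 : ({q, p, y, x} : Set V) = {p, q, x, y} := by
        rw [Set.pair_comm y x, Set.insert_comm]
      have hset3 : ({p, q, y, x} : Set V) = {p, q, x, y} := by rw [Set.pair_comm y x]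
      by_cases A1 : adj p x <;> by_cases A2 : adj p y <;>
        by_cases A3 : adj q x <;> by_cases A4 : adj q y
      · exact absurd ⟨A1, A2⟩ m1
      · exact absurd ⟨A1, A2⟩ m1
      · exact absurd ⟨A1, A2⟩ m1
      · exact absurd ⟨A1, A2⟩ m1
      · exact absurd ⟨A3, A4⟩ m2
      · exact absurd ⟨A1, A3⟩ m3
      · -- A1, ¬A2, ¬A3, A4 : C4 q p x y
        exact Or.inr (Or.inr ⟨hnd, q, p, x, y, hset1,
          hsymm hpq, A1, hxy, hsymm A4, A3, A2⟩)
      · -- A1 only : P4 q p x y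
        exact Or.inr (Or.inl ⟨hnd, q, p, x, y, hset1,
          hsymm hpq, A1, hxy, A3, A4, A2⟩)
      · exact absurd ⟨A3, A4⟩ m2
      · -- A2, A3 : C4 p q x y
        exact Or.inr (Or.inr ⟨hnd, p, q, x, y, rfl,
          hpq, A3, hxy, hsymm A2, A1, A4⟩)
      · exact absurd ⟨A2, A4⟩ m4
      · -- A2 only : P4 q p y x
        exact Or.inr (Or.inl ⟨hnd, q, p, y, x, hset2,
          hsymm hpq, A2, hsymm hxy, A4, A3, A1⟩)
      · exact absurd ⟨A3, A4⟩ m2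
      · -- A3 only : P4 p q x y
        exact Or.inr (Or.inl ⟨hnd, p, q, x, y, rfl,
          hpq, A3, hxy, A1, A2, A4⟩)
      · -- A4 only : P4 p q y x
        exact Or.inr (Or.inl ⟨hnd, p, q, y, x, hset3,
          hpq, A4, hsymm hxy, A2, A1, A3⟩)
      · -- none : 2K2 p q x y
        exact Or.inl ⟨hnd, p, q, x, y, rfl, hpq, hxy, A1, A2, A3, A4⟩

end AuxProof
section AuxProof2
variable {V : Type*} {adj : V → V → Prop}

lemma avoids_swap_right (hsymm : Symmetric adj) (hrefl : Reflexive adj)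
    {p q x y : V} (hpq : adj p q) (hxy : adj x y)
    (h : Avoids adj p q x y) : Avoids adj p q y x := by
  rw [avoids_iff hsymm hrefl hpq hxy] at h
  rw [avoids_iff hsymm hrefl hpq (hsymm hxy)]
  tauto

lemma avoids_swap_left (hsymm : Symmetric adj) (hrefl : Reflexive adj)
    {p q x y : V} (hpq : adj p q) (hxy : adj x y)
    (h : Avoids adj p q x y) : Avoids adj q p x y := by
  rw [avoids_iff hsymm hrefl hpq hxy] at h
  rw [avoids_iff hsymm hrefl (hsymm hpq) hxy]
  tauto

lemma avoids_congr (hsymm : Symmetric adj) (hrefl : Reflexive adj)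
    {u u' v v' p q x y : V} (hpq : adj p q) (hxy : adj x y)
    (h1 : s(u, u') = s(p, q)) (h2 : s(v, v') = s(x, y))
    (h : Avoids adj u u' v v') : Avoids adj p q x y := by
  rcases Sym2.eq_iff.mp h1 with ⟨e1, e2⟩ | ⟨e1, e2⟩ <;>
    rcases Sym2.eq_iff.mp h2 with ⟨f1, f2⟩ | ⟨f1, f2⟩ <;> subst e1 <;> subst e2 <;>
    subst f1 <;> subst f2
  · exact h
  · exact avoids_swap_right hsymm hrefl hpq (hsymm hxy) h
  · exact avoids_swap_left hsymm hrefl (hsymm hpq) hxy h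
  · exact avoids_swap_left hsymm hrefl (hsymm hpq) hxy
      (avoids_swap_right hsymm hrefl (hsymm hpq) (hsymm hxy) h)

lemma ne_of_avoids {u u' v v' : V} (h : Avoids adj u u' v v') : s(u, u') ≠ s(v, v') := by
  intro he
  obtain ⟨⟨n1, n2, n3, n4⟩, -⟩ := h
  rcases Sym2.eq_iff.mp he with ⟨e1, e2⟩ | ⟨e1, e2⟩ <;> tauto

end AuxProof2
section AuxProof3
variable {V : Type*} {adj : V → V → Prop}

/-- Package: a walk from the edge `ab` to the edge `cd`, all of whose edges are
avoided by `pq`. -/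
def WalkPkg (adj : V → V → Prop) (p q a b c d : V) : Prop :=
  ∃ (t : ℕ) (w : ℕ → V), 1 ≤ t ∧ IsWalkOn adj t w ∧ w 0 = a ∧ w 1 = b ∧
    w (t-1) = c ∧ w t = d ∧ ∀ i < t, Avoids adj p q (w i) (w (i+1))

lemma mk1 {p q v0 v1 : V} (h0 : adj v0 v1) (a0 : Avoids adj p q v0 v1) :
    WalkPkg adj p q v0 v1 v0 v1 := by
  refine ⟨1, (fun n => match n with | 0 => v0 | _ => v1), le_refl 1, ?_, rfl, rfl, rfl, rfl, ?_⟩ <;>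
    · intro i hi; interval_cases i <;> assumption

lemma mk2 {p q v0 v1 v2 : V} (h0 : adj v0 v1) (h1 : adj v1 v2)
    (a0 : Avoids adj p q v0 v1) (a1 : Avoids adj p q v1 v2) :
    WalkPkg adj p q v0 v1 v1 v2 := by
  refine ⟨2, (fun n => match n with | 0 => v0 | 1 => v1 | _ => v2), by omega, ?_, rfl, rfl, rfl,
    rfl, ?_⟩ <;>
    · intro i hi; interval_cases i <;> assumption

lemma mk3 {p q v0 v1 v2 v3 : V} (h0 : adj v0 v1) (h1 : adj v1 v2) (h2 : adj v2 v3)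
    (a0 : Avoids adj p q v0 v1) (a1 : Avoids adj p q v1 v2) (a2 : Avoids adj p q v2 v3) :
    WalkPkg adj p q v0 v1 v2 v3 := by
  refine ⟨3, (fun n => match n with | 0 => v0 | 1 => v1 | 2 => v2 | _ => v3), by omega, ?_, rfl,
    rfl, rfl, rfl, ?_⟩ <;>
    · intro i hi; interval_cases i <;> assumption

lemma mk4 {p q v0 v1 v2 v3 v4 : V} (h0 : adj v0 v1) (h1 : adj v1 v2) (h2 : adj v2 v3)
    (h3 : adj v3 v4)
    (a0 : Avoids adj p q v0 v1) (a1 : Avoids adj p q v1 v2) (a2 : Avoids adj p q v2 v3)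
    (a3 : Avoids adj p q v3 v4) :
    WalkPkg adj p q v0 v1 v3 v4 := by
  refine ⟨4, (fun n => match n with | 0 => v0 | 1 => v1 | 2 => v2 | 3 => v3 | _ => v4), by omega,
    ?_, rfl, rfl, rfl, rfl, ?_⟩ <;>
    · intro i hi; interval_cases i <;> assumption

lemma mk5 {p q v0 v1 v2 v3 v4 v5 : V} (h0 : adj v0 v1) (h1 : adj v1 v2) (h2 : adj v2 v3)
    (h3 : adj v3 v4) (h4 : adj v4 v5)
    (a0 : Avoids adj p q v0 v1) (a1 : Avoids adj p q v1 v2) (a2 : Avoids adj p q v2 v3)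
    (a3 : Avoids adj p q v3 v4) (a4 : Avoids adj p q v4 v5) :
    WalkPkg adj p q v0 v1 v4 v5 := by
  refine ⟨5, (fun n => match n with | 0 => v0 | 1 => v1 | 2 => v2 | 3 => v3 | 4 => v4 | _ => v5),
    by omega, ?_, rfl, rfl, rfl, rfl, ?_⟩ <;>
    · intro i hi; interval_cases i <;> assumption

lemma keyProp1 {A B C D E F : Prop} (hAB : ¬(A ∧ B)) (hCE : ¬(C ∧ E)) (hDF : ¬(D ∧ F))
    (hCD : ¬(C ∧ D)) (hEF : ¬(E ∧ F)) :
    (¬(A ∧ C) ∧ ¬(B ∧ D) ∧ ¬(A ∧ B) ∧ ¬(C ∧ D)) ∨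
    (¬(A ∧ E) ∧ ¬(B ∧ F) ∧ ¬(A ∧ B) ∧ ¬(E ∧ F)) := by tauto

lemma keyProp2 {A B C D E F : Prop} (hAB : ¬(A ∧ B)) (hCE : ¬(C ∧ E)) (hDF : ¬(D ∧ F))
    (hCD : ¬(C ∧ D)) (hEF : ¬(E ∧ F)) :
    (¬(C ∧ A) ∧ ¬(D ∧ B) ∧ ¬(C ∧ D) ∧ ¬(A ∧ B)) ∨
    (¬(E ∧ A) ∧ ¬(F ∧ B) ∧ ¬(E ∧ F) ∧ ¬(A ∧ B)) := by tauto

lemma segWalk (hsymm : Symmetric adj) (hrefl : Reflexive adj) {p q a b c d : V}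
    (hpq : adj p q) (hab : adj a b) (hcd : adj c d)
    (hA : Avoids adj p q a b) (hC : Avoids adj p q c d)
    (hcon : s(a, b) = s(c, d) ∨ ¬ AdjStar adj s(a, b) s(c, d)) :
    WalkPkg adj p q a b c d := by
  have hA' : Avoids adj p q b a := avoids_swap_right hsymm hrefl hpq hab hA
  have hC' : Avoids adj p q d c := avoids_swap_right hsymm hrefl hpq hcd hC
  by_cases h1 : a = c ∧ b = d
  · obtain ⟨rfl, rfl⟩ := h1; exact mk1 hab hA
  by_cases h2 : a = d ∧ b = c
  · obtain ⟨rfl, rfl⟩ := h2; exact mk2 hab (hsymm hab) hA hA'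
  by_cases hbc : b = c
  · subst hbc; exact mk2 hab hcd hA hC
  by_cases hac : a = c
  · subst hac; exact mk3 hab (hsymm hab) hcd hA hA' hC
  by_cases hbd : b = d
  · subst hbd; exact mk3 hab (hsymm hcd) hcd hA hC' hC
  by_cases had : a = d
  · subst had; exact mk4 hab (hsymm hab) (hsymm hcd) hcd hA hA' hC' hC
  -- now {a,b} and {c,d} are disjoint
  have hstar : ¬ AdjStar adj s(a, b) s(c, d) := by
    rcases hcon with he | hstar
    · rcases Sym2.eq_iff.mp he with ⟨e1, e2⟩ | ⟨e1, e2⟩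
      · exact absurd ⟨e1, e2⟩ h1
      · exact absurd ⟨e1, e2⟩ h2
    · exact hstar
  have hnav : ¬ Avoids adj a b c d := fun hv => hstar ⟨a, b, c, d, rfl, rfl, hv⟩
  rw [avoids_iff hsymm hrefl hab hcd] at hnav
  obtain ⟨⟨pa, pb, qa, qb⟩, mA⟩ := (avoids_iff hsymm hrefl hpq hab).mp hA
  obtain ⟨⟨pc, pd, qc, qd⟩, mC⟩ := (avoids_iff hsymm hrefl hpq hcd).mp hC
  have hor : (adj a c ∧ adj a d) ∨ (adj b c ∧ adj b d) ∨ (adj a c ∧ adj b c) ∨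
      (adj a d ∧ adj b d) := by
    by_contra hcontra
    push_neg at hcontra
    exact hnav ⟨⟨hac, had, hbc, hbd⟩, fun h => hcontra.1 h.1 h.2, fun h => hcontra.2.1 h.1 h.2,
      fun h => hcontra.2.2.1 h.1 h.2, fun h => hcontra.2.2.2 h.1 h.2⟩
  rcases hor with ⟨Hac, Had⟩ | ⟨Hbc, Hbd⟩ | ⟨Hac, Hbc⟩ | ⟨Had, Hbd⟩
  · rcases keyProp1 mA.2.2.1 mC.1 mC.2.1 mC.2.2.1 mC.2.2.2 with hM | hM
    · exact mk4 hab (hsymm hab) Hac hcd hA hA'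
        ((avoids_iff hsymm hrefl hpq Hac).mpr ⟨⟨pa, pc, qa, qc⟩, hM⟩) hC
    · exact mk5 hab (hsymm hab) Had (hsymm hcd) hcd hA hA'
        ((avoids_iff hsymm hrefl hpq Had).mpr ⟨⟨pa, pd, qa, qd⟩, hM⟩) hC' hC
  · rcases keyProp1 mA.2.2.2 mC.1 mC.2.1 mC.2.2.1 mC.2.2.2 with hM | hM
    · exact mk3 hab Hbc hcd hA
        ((avoids_iff hsymm hrefl hpq Hbc).mpr ⟨⟨pb, pc, qb, qc⟩, hM⟩) hC
    · exact mk4 hab Hbd (hsymm hcd) hcd hA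
        ((avoids_iff hsymm hrefl hpq Hbd).mpr ⟨⟨pb, pd, qb, qd⟩, hM⟩) hC' hC
  · rcases keyProp2 mC.2.2.1 mA.1 mA.2.1 mA.2.2.1 mA.2.2.2 with hM | hM
    · exact mk4 hab (hsymm hab) Hac hcd hA hA'
        ((avoids_iff hsymm hrefl hpq Hac).mpr ⟨⟨pa, pc, qa, qc⟩, hM⟩) hC
    · exact mk3 hab Hbc hcd hA
        ((avoids_iff hsymm hrefl hpq Hbc).mpr ⟨⟨pb, pc, qb, qc⟩, hM⟩) hC
  · rcases keyProp2 mC.2.2.2 mA.1 mA.2.1 mA.2.2.1 mA.2.2.2 with hM | hM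
    · exact mk5 hab (hsymm hab) Had (hsymm hcd) hcd hA hA'
        ((avoids_iff hsymm hrefl hpq Had).mpr ⟨⟨pa, pd, qa, qd⟩, hM⟩) hC' hC
    · exact mk4 hab Hbd (hsymm hcd) hcd hA
        ((avoids_iff hsymm hrefl hpq Hbd).mpr ⟨⟨pb, pd, qb, qd⟩, hM⟩) hC' hC

end AuxProof3
section AuxProof4
variable {V : Type*} {adj : V → V → Prop}

lemma walk_append {p q : V} {t1 t2 : ℕ} {w1 w2 : ℕ → V}
    (h1 : 1 ≤ t1) (hw1 : IsWalkOn adj t1 w1)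
    (hE1 : ∀ i < t1, Avoids adj p q (w1 i) (w1 (i+1)))
    (h2 : 1 ≤ t2) (hw2 : IsWalkOn adj t2 w2)
    (hE2 : ∀ i < t2, Avoids adj p q (w2 i) (w2 (i+1)))
    (hm1 : w1 (t1 - 1) = w2 0) (hm2 : w1 t1 = w2 1) :
    WalkPkg adj p q (w1 0) (w1 1) (w2 (t2 - 1)) (w2 t2) := by
  set w : ℕ → V := fun i => if i ≤ t1 then w1 i else w2 (i - t1 + 1) with hw
  have key : ∀ (P : V → V → Prop), (∀ i < t1, P (w1 i) (w1 (i+1))) →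
      (∀ i < t2, P (w2 i) (w2 (i+1))) → ∀ i < t1 + t2 - 1, P (w i) (w (i+1)) := by
    intro P hP1 hP2 i hi
    by_cases c1 : i + 1 ≤ t1
    · have ci : i ≤ t1 := by omega
      simp only [hw, if_pos c1, if_pos ci]
      exact hP1 i (by omega)
    · by_cases c2 : i ≤ t1
      · have hieq : i = t1 := by omega
        have e1 : i + 1 - t1 + 1 = 2 := by omega
        simp only [hw, if_pos c2, if_neg c1, e1]
        rw [hieq, hm2]
        exact hP2 1 (by omega)
      · have e1 : i + 1 - t1 + 1 = (i - t1 + 1) + 1 := by omega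
        simp only [hw, if_neg c2, if_neg (show ¬ i + 1 ≤ t1 by omega), e1]
        exact hP2 (i - t1 + 1) (by omega)
  refine ⟨t1 + t2 - 1, w, by omega, key adj hw1 hw2, ?_, ?_, ?_, ?_,
    key (Avoids adj p q) hE1 hE2⟩
  · simp only [hw, if_pos (show (0:ℕ) ≤ t1 by omega)]
  · simp only [hw, if_pos h1]
  · -- w (t1 + t2 - 1 - 1) = w2 (t2 - 1)
    by_cases c : t2 = 1
    · subst c
      have e : t1 + 1 - 1 - 1 = t1 - 1 := by omega
      rw [e]
      simp only [hw, if_pos (show t1 - 1 ≤ t1 by omega)]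
      rw [hm1]
    · by_cases c2 : t2 = 2
      · subst c2
        have e : t1 + 2 - 1 - 1 = t1 := by omega
        rw [e]
        simp only [hw, if_pos (le_refl t1)]
        rw [hm2]
      · have hgt : ¬ t1 + t2 - 1 - 1 ≤ t1 := by omega
        have e : t1 + t2 - 1 - 1 - t1 + 1 = t2 - 1 := by omega
        simp only [hw, if_neg hgt, e]
  · by_cases c : t2 = 1
    · subst c
      have e : t1 + 1 - 1 = t1 := by omega
      rw [e]
      simp only [hw, if_pos (le_refl t1)]
      rw [hm2]
    · have hgt : ¬ t1 + t2 - 1 ≤ t1 := by omega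
      have e : t1 + t2 - 1 - t1 + 1 = t2 := by omega
      simp only [hw, if_neg hgt, e]

lemma chainWalk (hsymm : Symmetric adj) (hrefl : Reflexive adj) {p q : V} (hpq : adj p q)
    {T : ℕ} {a b : ℕ → V}
    (hadj : ∀ j, adj (a j) (b j))
    (hav : ∀ j ≤ T, Avoids adj p q (a j) (b j))
    (hcon : ∀ j < T, s(a j, b j) = s(a (j+1), b (j+1)) ∨
      ¬ AdjStar adj s(a j, b j) s(a (j+1), b (j+1))) :
    ∀ m ≤ T, WalkPkg adj p q (a 0) (b 0) (a m) (b m) := by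
  intro m
  induction m with
  | zero =>
    intro _
    exact mk1 (hadj 0) (hav 0 (by omega))
  | succ n ih =>
    intro hn
    obtain ⟨t1, w1, ht1, hwalk1, hs0, hs1, he0, he1, hE1⟩ := ih (by omega)
    obtain ⟨t2, w2, ht2, hwalk2, hs0', hs1', he0', he1', hE2⟩ :=
      segWalk hsymm hrefl hpq (hadj n) (hadj (n+1)) (hav n (by omega)) (hav (n+1) hn)
        (hcon n (by omega))
    have pkg := walk_append ht1 hwalk1 hE1 ht2 hwalk2 hE2
      (by rw [he0, hs0']) (by rw [he1, hs1'])
    rw [hs0, hs1, he0', he1'] at pkg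
    exact pkg
end AuxProof4

/-- **Theorem (Statement 7).** A reflexive graph `G` contains a weak edge-asteroid if and
only if the complement of its avoidance graph `G*` (with a loop at every vertex) contains
an asteroid. -/
theorem weakEdgeAsteroid_iff_asteroid_in_complement_avoidanceGraph
    {V : Type*} [Fintype V] (adj : V → V → Prop)
    (hsymm : Symmetric adj) (hrefl : Reflexive adj) :
    (∃ (k : ℕ) (x y : ZMod (2*k+1) → V), WeakEdgeAsteroid adj k x y) ↔
      ∃ (k : ℕ) (e : ZMod (2*k+1) → GEdgeSet adj),
        Asteroid (fun e f : GEdgeSet adj => e = f ∨ ¬ AdjStar adj e.1 f.1) k e := by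
  constructor
  · rintro ⟨k, x, y, hadjxy, hast⟩
    refine ⟨k, fun i => ⟨s(x i, y i), x i, y i, rfl, hadjxy i⟩, ?_⟩
    intro i
    obtain ⟨t, w, ht, hwalk, hstart, hend, havd⟩ := hast i
    have hmem : ∀ j : ℕ, s(w (min j (t-1)), w (min j (t-1) + 1)) ∈ GEdgeSet adj := by
      intro j
      exact ⟨w (min j (t-1)), w (min j (t-1) + 1), rfl,
        hwalk _ (lt_of_le_of_lt (min_le_right _ _) (by omega))⟩
    refine ⟨t - 1, fun j => ⟨s(w (min j (t-1)), w (min j (t-1) + 1)), hmem j⟩, ?_, ?_, ?_, ?_⟩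
    · apply Subtype.ext
      show s(w (min 0 (t-1)), w (min 0 (t-1) + 1)) = s(x _, y _)
      rw [Nat.zero_min]
      rcases hstart with ⟨hs1, hs2⟩ | ⟨hs1, hs2⟩
      · rw [hs1, hs2]
      · rw [hs1, hs2, Sym2.eq_swap]
    · apply Subtype.ext
      show s(w (min (t-1) (t-1)), w (min (t-1) (t-1) + 1)) = s(x _, y _)
      rw [min_self]
      have e1 : t - 1 + 1 = t := by omega
      rw [e1]
      rcases hend with ⟨hs1, hs2⟩ | ⟨hs1, hs2⟩
      · rw [hs1, hs2]
      · rw [hs1, hs2, Sym2.eq_swap]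
    · intro j hj
      refine Or.inr ?_
      rintro ⟨u, u', v, v', hh1, hh2, hv⟩
      have mj : min j (t-1) = j := by omega
      have mj1 : min (j+1) (t-1) = j+1 := by omega
      have hh1' : s(w j, w (j+1)) = s(u, u') := by
        have h0 : s(w (min j (t-1)), w (min j (t-1) + 1)) = s(u, u') := hh1
        rwa [mj] at h0
      have hh2' : s(w (j+1), w (j+1+1)) = s(v, v') := by
        have h0 : s(w (min (j+1) (t-1)), w (min (j+1) (t-1) + 1)) = s(v, v') := hh2
        rwa [mj1] at h0
      obtain ⟨⟨n1, n2, n3, n4⟩, -⟩ := hv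
      rcases Sym2.eq_iff.mp hh1' with ⟨f1, f2⟩ | ⟨f1, f2⟩ <;>
        rcases Sym2.eq_iff.mp hh2' with ⟨g1, g2⟩ | ⟨g1, g2⟩ <;>
        first
          | exact n1 (f2.symm.trans g1)
          | exact n2 (f2.symm.trans g1)
          | exact n3 (f2.symm.trans g1)
          | exact n4 (f2.symm.trans g1)
    · intro j hj
      have hjt : j < t := by omega
      have mj : min j (t-1) = j := by omega
      have hav := havd j hjt
      intro hor
      rcases hor with heq | hna
      · have h2 : s(x i, y i) = s(w (min j (t-1)), w (min j (t-1) + 1)) :=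
          Subtype.ext_iff.mp heq
        rw [mj] at h2
        exact ne_of_avoids hav h2
      · refine hna ⟨x i, y i, w j, w (j+1), rfl, ?_, hav⟩
        show s(w (min j (t-1)), w (min j (t-1) + 1)) = s(w j, w (j+1))
        rw [mj]
  · rintro ⟨k, e, hast⟩
    have hchoice : ∀ i, ∃ u v : V, (e i : Sym2 V) = s(u, v) ∧ adj u v := fun i => (e i).2
    choose x y hxy hadj using hchoice
    refine ⟨k, x, y, hadj, ?_⟩
    intro i
    obtain ⟨t, W, hW0, hWt, hWwalk, hWav⟩ := hast i
    have hch2 : ∀ j : ℕ, ∃ u v : V, (W j : Sym2 V) = s(u, v) ∧ adj u v := fun j => (W j).2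
    choose a b hab1 hab2 using hch2
    have hAv : ∀ j ≤ t, Avoids adj (x i) (y i) (a j) (b j) := by
      intro j hj
      have h := hWav j hj
      rw [not_or, not_not] at h
      obtain ⟨hne, u, u', v, v', hh1, hh2, hv⟩ := h
      exact avoids_congr hsymm hrefl (hadj i) (hab2 j)
        (hh1.symm.trans (hxy i)) (hh2.symm.trans (hab1 j)) hv
    have hcon : ∀ j < t, s(a j, b j) = s(a (j+1), b (j+1)) ∨
        ¬ AdjStar adj s(a j, b j) s(a (j+1), b (j+1)) := by
      intro j hj
      rcases hWwalk j hj with heq | hna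
      · left; rw [← hab1 j, ← hab1 (j+1), heq]
      · right; rw [← hab1 j, ← hab1 (j+1)]; exact hna
    obtain ⟨T, wk, hT, hwalk, hw0, hw1, hwp, hwt, hEA⟩ :=
      chainWalk hsymm hrefl (hadj i) hab2 hAv hcon t le_rfl
    have hs0 : s(a 0, b 0) = s(x (i + (k : ZMod (2*k+1))), y (i + (k : ZMod (2*k+1)))) := by
      rw [← hab1 0, hW0]; exact hxy _
    have hs1 : s(a t, b t) = s(x (i + (k : ZMod (2*k+1)) + 1), y (i + (k : ZMod (2*k+1)) + 1)) := by
      rw [← hab1 t, hWt]; exact hxy _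
    refine ⟨T, wk, hT, hwalk, ?_, ?_, hEA⟩
    · rcases Sym2.eq_iff.mp hs0 with ⟨g1, g2⟩ | ⟨g1, g2⟩
      · exact Or.inl ⟨hw0.trans g1, hw1.trans g2⟩
      · exact Or.inr ⟨hw0.trans g1, hw1.trans g2⟩
    · rcases Sym2.eq_iff.mp hs1 with ⟨g1, g2⟩ | ⟨g1, g2⟩
      · exact Or.inl ⟨hwp.trans g1, hwt.trans g2⟩
      · exact Or.inr ⟨hwp.trans g1, hwt.trans g2⟩
end

section
/- The reflexive graph K_{3,3} (the complete bipartite graph with two parts of size 3, with a loop added at every vertex) is not a strong cocomparability graph. -/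
/-!
Common definitions.  A reflexive graph on a finite vertex type `V` is given by a
symmetric, reflexive adjacency relation `adj : V → V → Prop`; the edge set consists
of all pairs (including loops `v v`) with `adj u v`.
-/

variable {V : Type*}

/-- The reflexive graph `K_{3,3}` (complete bipartite with parts of
size 3, loops at all vertices) is not a strong cocomparability graph. -/
theorem k33_not_strongCocomp :
    ¬ IsStrongCocomp (fun u v : Fin 2 × Fin 3 => u = v ∨ u.1 ≠ v.1) := by
  rintro ⟨lt, hsto, h⟩
  haveI := hsto
  have tri : ∀ i : Fin 3, lt ((0:Fin 2), i) ((1:Fin 2), i) ∨ lt ((1:Fin 2), i) ((0:Fin 2), i) := by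
    intro i
    rcases trichotomous_of lt ((0:Fin 2), i) ((1:Fin 2), i) with h1 | h1 | h1
    · exact Or.inl h1
    · exact absurd h1 (by simp)
    · exact Or.inr h1
  have key : ∀ i j : Fin 3, i ≠ j → lt ((0:Fin 2), i) ((1:Fin 2), i) →
      lt ((0:Fin 2), j) ((1:Fin 2), j) → False := by
    intro i j hij hi hj
    refine h ((0:Fin 2), i) ((1:Fin 2), i) ((0:Fin 2), j) ((1:Fin 2), j) hi hj ⟨?_, ?_, ?_, ?_⟩
    · simp [Prod.ext_iff, hij]
    · exact Or.inr (by simp)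
    · exact Or.inr (by simp)
    · simp [Prod.ext_iff, hij]
  have key' : ∀ i j : Fin 3, i ≠ j → lt ((1:Fin 2), i) ((0:Fin 2), i) →
      lt ((1:Fin 2), j) ((0:Fin 2), j) → False := by
    intro i j hij hi hj
    refine h ((1:Fin 2), i) ((0:Fin 2), i) ((1:Fin 2), j) ((0:Fin 2), j) hi hj ⟨?_, ?_, ?_, ?_⟩
    · simp [Prod.ext_iff, hij]
    · exact Or.inr (by simp)
    · exact Or.inr (by simp)
    · simp [Prod.ext_iff, hij]
  rcases tri 0 with h0 | h0 <;> rcases tri 1 with h1 | h1 <;> rcases tri 2 with h2 | h2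
  · exact key 0 1 (by decide) h0 h1
  · exact key 0 1 (by decide) h0 h1
  · exact key 0 2 (by decide) h0 h2
  · exact key' 1 2 (by decide) h1 h2
  · exact key 1 2 (by decide) h1 h2
  · exact key' 0 2 (by decide) h0 h2
  · exact key' 0 1 (by decide) h0 h1
  · exact key' 0 1 (by decide) h0 h1
end

section
/- A bigraph H is a cocomparability bigraph if and only if the reflexive graph H^{++} is a strong cocomparability graph. -/
/-!
Common definitions.  A reflexive graph on a finite vertex type `V` is given by a
symmetric, reflexive adjacency relation `adj : V → V → Prop`; the edge set consists
of all pairs (including loops `v v`) with `adj u v`.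
-/

variable {V : Type*}

/-- **Theorem (Statement 15).** A bigraph `H` is a cocomparability bigraph iff the
reflexive graph `H⁺⁺` (obtained by completing both colour classes to cliques and adding
all loops) is a strong cocomparability graph. -/
theorem cocompBigraph_iff_plusPlus_strongCocomp
    {X Y : Type*} [Fintype X] [Fintype Y] (A : X → Y → Prop) :
    IsCocompBigraph A ↔
      IsStrongCocomp (fun p q : X ⊕ Y =>
        match p, q with
        | Sum.inl _, Sum.inl _ => True
        | Sum.inr _, Sum.inr _ => True
        | Sum.inl x, Sum.inr y => A x y
        | Sum.inr y, Sum.inl x => A x y) := by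
  constructor
  · rintro ⟨ltX, ltY, hX, hY, hfree⟩
    refine ⟨fun p q => match p, q with
      | Sum.inl a, Sum.inl b => ltX a b
      | Sum.inr a, Sum.inr b => ltY a b
      | Sum.inl _, Sum.inr _ => True
      | Sum.inr _, Sum.inl _ => False, ?_, ?_⟩
    · refine @IsStrictTotalOrder.mk _ _ ⟨?_⟩ (@IsStrictOrder.mk _ _ ⟨?_⟩ ⟨?_⟩)
      · intro p q
        match p, q with
        | Sum.inl a, Sum.inl b =>
          intro h1 h2
          exact congrArg Sum.inl (hX.trichotomous a b h1 h2)
        | Sum.inr a, Sum.inr b =>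
          intro h1 h2
          exact congrArg Sum.inr (hY.trichotomous a b h1 h2)
        | Sum.inl a, Sum.inr b => exact fun h _ => absurd trivial h
        | Sum.inr a, Sum.inl b => exact fun _ h => absurd trivial h
      · intro p
        match p with
        | Sum.inl a => exact hX.irrefl a
        | Sum.inr a => exact hY.irrefl a
      · intro p q r hpq hqr
        match p, q, r with
        | Sum.inl a, Sum.inl b, Sum.inl c => exact hX.trans a b c hpq hqr
        | Sum.inr a, Sum.inr b, Sum.inr c => exact hY.trans a b c hpq hqr
        | Sum.inl _, Sum.inl _, Sum.inr _ => exact trivial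
        | Sum.inl _, Sum.inr _, Sum.inr _ => exact trivial
        | Sum.inl _, Sum.inr _, Sum.inl _ => exact absurd hqr id
        | Sum.inr _, Sum.inl _, _ => exact absurd hpq id
        | Sum.inr _, Sum.inr _, Sum.inl _ => exact absurd hqr id
    · rintro u v x y huv hxy ⟨h1, h2, h3, h4⟩
      match u, v, x, y with
      | Sum.inl a, Sum.inl a', Sum.inl b, _ => exact h1 trivial
      | Sum.inr a, Sum.inr a', Sum.inr b, _ => exact h1 trivial
      | Sum.inl a, Sum.inl a', Sum.inr b, Sum.inl b' => exact absurd hxy id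
      | Sum.inl a, Sum.inl a', Sum.inr b, Sum.inr b' =>
        exact hfree a a' b b' huv hxy ⟨h1, h2, h3, h4⟩
      | Sum.inr a, Sum.inr a', Sum.inl b, Sum.inr b' => exact h4 trivial
      | Sum.inr a, Sum.inr a', Sum.inl b, Sum.inl b' =>
        exact hfree b b' a a' hxy huv ⟨h1, h3, h2, h4⟩
      | Sum.inl a, Sum.inr a', Sum.inl b, Sum.inl b' => exact h1 trivial
      | Sum.inl a, Sum.inr a', Sum.inl b, Sum.inr b' => exact h1 trivial
      | Sum.inl a, Sum.inr a', Sum.inr b, Sum.inl b' => exact absurd hxy id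
      | Sum.inl a, Sum.inr a', Sum.inr b, Sum.inr b' => exact h4 trivial
      | Sum.inr a, Sum.inl a', _, _ => exact absurd huv id
  · rintro ⟨lt, hlt, hfree⟩
    refine ⟨fun a b => lt (Sum.inl a) (Sum.inl b), fun a b => lt (Sum.inr a) (Sum.inr b),
      ?_, ?_, ?_⟩
    · refine @IsStrictTotalOrder.mk _ _ ⟨?_⟩ (@IsStrictOrder.mk _ _ ⟨?_⟩ ⟨?_⟩)
      · intro a b
        intro h1 h2
        exact Sum.inl.inj (hlt.trichotomous (Sum.inl a) (Sum.inl b) h1 h2)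
      · exact fun a => hlt.irrefl _
      · exact fun a b c => hlt.trans _ _ _
    · refine @IsStrictTotalOrder.mk _ _ ⟨?_⟩ (@IsStrictOrder.mk _ _ ⟨?_⟩ ⟨?_⟩)
      · intro a b
        intro h1 h2
        exact Sum.inr.inj (hlt.trichotomous (Sum.inr a) (Sum.inr b) h1 h2)
      · exact fun a => hlt.irrefl _
      · exact fun a b c => hlt.trans _ _ _
    · intro x1 x2 y1 y2 h1 h2 hs
      exact hfree (Sum.inl x1) (Sum.inl x2) (Sum.inr y1) (Sum.inr y2) h1 h2 hs
end

section
/- A reflexive graph is a cocomparability graph if and only if it does not contain an asteroid. -/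
/-!
Common definitions.  A reflexive graph on a finite vertex type `V` is given by a
symmetric, reflexive adjacency relation `adj : V → V → Prop`; the edge set consists
of all pairs (including loops `v v`) with `adj u v`.
-/

variable {V : Type*}

namespace Gallai

open Relation

variable {V : Type*}

/-- Ordered pair is an edge of the complement graph. -/
def pE (adj : V → V → Prop) (p : V × V) : Prop := p.1 ≠ p.2 ∧ ¬ adj p.1 p.2

/-- One step of Golumbic's forcing relation `Γ` on ordered complement edges. -/
def Lam (adj : V → V → Prop) (p q : V × V) : Prop :=
  pE adj p ∧ pE adj q ∧
    ((p.1 = q.1 ∧ ¬ pE adj (p.2, q.2)) ∨ (p.2 = q.2 ∧ ¬ pE adj (p.1, q.1)))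

/-- Forcing equivalence (implication classes). -/
def Sim (adj : V → V → Prop) : V × V → V × V → Prop := ReflTransGen (Lam adj)

variable {adj : V → V → Prop}

section basic

lemma pE_swap (hsymm : Symmetric adj) {u v : V} (h : pE adj (u, v)) : pE adj (v, u) :=
  ⟨Ne.symm h.1, fun a => h.2 (hsymm a)⟩

lemma Lam_symm (hsymm : Symmetric adj) {p q} (h : Lam adj p q) : Lam adj q p := by
  obtain ⟨h1, h2, h3 | h3⟩ := h
  · exact ⟨h2, h1, Or.inl ⟨h3.1.symm, fun a => h3.2 (pE_swap hsymm a)⟩⟩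
  · exact ⟨h2, h1, Or.inr ⟨h3.1.symm, fun a => h3.2 (pE_swap hsymm a)⟩⟩

lemma Lam_swap (hsymm : Symmetric adj) {p q} (h : Lam adj p q) : Lam adj p.swap q.swap := by
  obtain ⟨h1, h2, h3 | h3⟩ := h
  · exact ⟨pE_swap hsymm h1, pE_swap hsymm h2, Or.inr h3⟩
  · exact ⟨pE_swap hsymm h1, pE_swap hsymm h2, Or.inl h3⟩

lemma Sim_symm (hsymm : Symmetric adj) {p q} (h : Sim adj p q) : Sim adj q p :=
  by haveI : Std.Symm (Lam adj) := ⟨fun _ _ hh => Lam_symm hsymm hh⟩; exact ReflTransGen.symmetric.symm _ _ h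

lemma Sim_trans {p q r} (h : Sim adj p q) (h' : Sim adj q r) : Sim adj p r :=
  ReflTransGen.trans h h'

lemma Sim_swap (hsymm : Symmetric adj) {p q} (h : Sim adj p q) : Sim adj p.swap q.swap := by
  induction h with
  | refl => exact ReflTransGen.refl
  | tail _ h2 ih => exact ih.tail (Lam_swap hsymm h2)

lemma Sim_swap' (hsymm : Symmetric adj) {a b c d : V} (h : Sim adj (a, b) (c, d)) : Sim adj (b, a) (d, c) :=
  Sim_swap hsymm h

lemma Sim_pE {p q} (h : Sim adj p q) (hp : pE adj p) : pE adj q := by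
  induction h with
  | refl => exact hp
  | tail _ h2 _ => exact h2.2.1

/-- The triangle lemma (Golumbic). `x` is an apex over the implication class of
`(p₀, q₀)`. -/
lemma tri (hsymm : Symmetric adj) (x : V) {p₀ q₀ : V}
    (hE : pE adj (p₀, q₀)) (hxp : pE adj (x, p₀)) (hxq : pE adj (x, q₀))
    (h1 : ¬ Sim adj (p₀, q₀) (p₀, x)) (h2 : ¬ Sim adj (p₀, q₀) (x, q₀)) :
    ∀ {p q : V}, Sim adj (p₀, q₀) (p, q) →
      pE adj (x, p) ∧ pE adj (x, q) ∧ Sim adj (x, p₀) (x, p) ∧ Sim adj (x, q₀) (x, q) := by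
  intro p q h
  have main : ∀ r : V × V, Sim adj (p₀, q₀) r →
      pE adj (x, r.1) ∧ pE adj (x, r.2) ∧ Sim adj (x, p₀) (x, r.1) ∧
        Sim adj (x, q₀) (x, r.2) := by
    intro r h
    induction h with
    | refl => exact ⟨hxp, hxq, ReflTransGen.refl, ReflTransGen.refl⟩
    | @tail b c hb hbc ih =>
      obtain ⟨ih1, ih2, ih3, ih4⟩ := ih
      have hcE : pE adj c := hbc.2.1
      obtain ⟨heq, hne⟩ | ⟨heq, hne⟩ := hbc.2.2
      · -- second coordinate moves : b.1 = c.1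
        have hxc2 : pE adj (x, c.2) := by
          by_contra hcon
          have hstep : Lam adj (b.1, c.2) (b.1, x) := by
            refine ⟨by rw [heq]; exact hcE, ⟨ih1.1.symm, fun a => ih1.2 (hsymm a)⟩,
              Or.inl ⟨rfl, fun a => hcon (pE_swap hsymm a)⟩⟩
          have hc1 : Sim adj (p₀, q₀) (b.1, c.2) := by
            have : Sim adj (p₀, q₀) c := hb.tail hbc
            rwa [show c = (b.1, c.2) by rw [heq]] at this
          have hc2 : Sim adj (p₀, q₀) (b.1, x) := hc1.tail hstep
          have hc3 : Sim adj (p₀, x) (b.1, x) := Sim_swap hsymm ih3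
          exact h1 (Sim_trans hc2 (Sim_symm hsymm hc3))
        have hxc1 : pE adj (x, c.1) := by rw [← heq]; exact ih1
        refine ⟨hxc1, hxc2, ?_, ?_⟩
        · rw [← heq]; exact ih3
        · refine ih4.tail ⟨ih2, hxc2, Or.inl ⟨rfl, hne⟩⟩
      · -- first coordinate moves : b.2 = c.2
        have hxc1 : pE adj (x, c.1) := by
          by_contra hcon
          have hstep : Lam adj (c.1, b.2) (x, b.2) := by
            refine ⟨by rw [heq]; exact hcE, ⟨ih2.1, ih2.2⟩,
              Or.inr ⟨rfl, fun a => hcon (pE_swap hsymm a)⟩⟩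
          have hc1 : Sim adj (p₀, q₀) (c.1, b.2) := by
            have : Sim adj (p₀, q₀) c := hb.tail hbc
            rwa [show c = (c.1, b.2) by rw [heq]] at this
          have hc2 : Sim adj (p₀, q₀) (x, b.2) := hc1.tail hstep
          have : Sim adj (x, q₀) (x, b.2) := ih4
          exact h2 (Sim_trans hc2 (Sim_symm hsymm this))
        have hxc2 : pE adj (x, c.2) := by rw [← heq]; exact ih2
        refine ⟨hxc1, hxc2, ?_, ?_⟩
        · refine ih3.tail ⟨ih1, hxc1, Or.inl ⟨rfl, hne⟩⟩
        · rw [← heq]; exact ih4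
  exact main (p, q) h

end basic



/-- A canonical jump over the removed implication class with reference edge `(s,t)`:
from `(x,s)` to `(x,t)`, with all legality conditions. -/
def JR (adj : V → V → Prop) (s t : V) (a b : V × V) : Prop :=
  ∃ x : V, a = (x, s) ∧ b = (x, t) ∧ pE adj (s, t) ∧ pE adj (x, s) ∧ pE adj (x, t) ∧
    ¬ Sim adj (s, t) (x, s) ∧ ¬ Sim adj (s, t) (s, x) ∧ ¬ Sim adj (s, t) (x, t) ∧
    ¬ Sim adj (s, t) (t, x) ∧ ¬ Sim adj (x, s) (x, t)

def Jump (adj : V → V → Prop) (s t : V) (a b : V × V) : Prop :=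
  JR adj s t a b ∨ JR adj t s a b ∨ JR adj s t a.swap b.swap ∨ JR adj t s a.swap b.swap

lemma Jump_comm {s t : V} {a b : V × V} (h : Jump adj s t a b) : Jump adj t s a b := by
  obtain h | h | h | h := h
  · exact Or.inr (Or.inl h)
  · exact Or.inl h
  · exact Or.inr (Or.inr (Or.inr h))
  · exact Or.inr (Or.inr (Or.inl h))

lemma Jump_swap {s t : V} {a b : V × V} (h : Jump adj s t a b) :
    Jump adj s t a.swap b.swap := by
  obtain h | h | h | h := h
  · exact Or.inr (Or.inr (Or.inl (by simpa using h)))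
  · exact Or.inr (Or.inr (Or.inr (by simpa using h)))
  · exact Or.inl (by simpa using h)
  · exact Or.inr (Or.inl (by simpa using h))

/-- The master machine: the triangle lemma applied with apex `s` over the class of
`(x,t)`, given the legality data of an `(s,t)`-jump at `x`. -/
lemma Mcon (hsymm : Symmetric adj) {s t x : V}
    (hst : pE adj (s, t)) (hxs : pE adj (x, s)) (hxt : pE adj (x, t))
    (L2 : ¬ Sim adj (s, t) (s, x)) (L3 : ¬ Sim adj (s, t) (x, t))
    (L5 : ¬ Sim adj (x, s) (x, t)) :
    ∀ {p q : V}, Sim adj (x, t) (p, q) →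
      pE adj (s, p) ∧ pE adj (s, q) ∧ Sim adj (s, x) (s, p) ∧ Sim adj (s, t) (s, q) := by
  intro p q h
  refine tri hsymm s (p₀ := x) (q₀ := t) hxt (pE_swap hsymm hxs) hst ?_ ?_ h
  · intro hcon; exact L5 (Sim_symm hsymm hcon)
  · intro hcon; exact L3 (Sim_symm hsymm hcon)

/-- Core case analysis: a canonical `(s,t)`-jump followed (after a forcing chain) by any
jump either cancels or is impossible. -/
lemma ADJ_core (hsymm : Symmetric adj) {s t : V} {a b a' b' : V × V}
    (j1 : JR adj s t a b) (hsim : Sim adj b a') (j2 : Jump adj s t a' b') :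
    Sim adj a b' := by
  obtain ⟨x, ha, hb, hst, hxs, hxt, L1, L2, L3, L4, L5⟩ := j1
  subst ha hb
  obtain j | j | j | j := j2
  · -- JR s t : a' = (x', s) : impossible
    obtain ⟨x', ha', _, _, _, _, _, _, _, _, _⟩ := j
    subst ha'
    obtain ⟨_, hEq, _, _⟩ := Mcon hsymm hst hxs hxt L2 L3 L5 hsim
    exact absurd rfl hEq.1
  · -- JR t s : a' = (x', t), b' = (x', s) : cancellation
    obtain ⟨x', ha', hb', _, _, _, _, _, _, _, _⟩ := j
    subst ha' hb'
    obtain ⟨_, _, hP, _⟩ := Mcon hsymm hst hxs hxt L2 L3 L5 hsim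
    exact Sim_swap' hsymm hP
  · -- JL s t : a' = (s, y') : impossible
    obtain ⟨y', ha', _, _, _, _, _, _, _, _, _⟩ := j
    have ha'' : a' = (s, y') := by
      have := congrArg Prod.swap ha'; simpa using this
    subst ha''
    obtain ⟨hEp, _, _, _⟩ := Mcon hsymm hst hxs hxt L2 L3 L5 hsim
    exact absurd rfl hEp.1
  · -- JL t s : a' = (t, y') : impossible
    obtain ⟨y', ha', _, _, _, _, _, _, _, _, _⟩ := j
    have ha'' : a' = (t, y') := by
      have := congrArg Prod.swap ha'; simpa using this
    subst ha''
    obtain ⟨_, _, hP, _⟩ := Mcon hsymm hst hxs hxt L2 L3 L5 hsim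
    exact absurd (Sim_symm hsymm hP) L2

lemma ADJACENT (hsymm : Symmetric adj) {s t : V} {a b a' b' : V × V}
    (j1 : Jump adj s t a b) (hsim : Sim adj b a') (j2 : Jump adj s t a' b') :
    Sim adj a b' := by
  obtain j | j | j | j := j1
  · exact ADJ_core hsymm j hsim j2
  · exact ADJ_core hsymm j hsim (Jump_comm j2)
  · have := ADJ_core hsymm j (Sim_swap hsymm hsim) (Jump_swap j2)
    simpa using Sim_swap hsymm this
  · have := ADJ_core hsymm j (Sim_swap hsymm hsim) (Jump_swap (Jump_comm j2))
    simpa using Sim_swap hsymm this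

/-- A single jump cannot invert a pair. -/
lemma END_core (hsymm : Symmetric adj) {s t u v : V} {a b : V × V}
    (hsim1 : Sim adj (u, v) a) (j : JR adj s t a b) (hsim2 : Sim adj b (v, u)) :
    False := by
  obtain ⟨x, ha, hb, hst, hxs, hxt, L1, L2, L3, L4, L5⟩ := j
  subst ha hb
  -- (x,s) ~ (u,v) ~ (t,x)
  have h1 : Sim adj (x, s) (u, v) := Sim_symm hsymm hsim1
  have h2 : Sim adj (u, v) (t, x) := Sim_symm hsymm (Sim_swap' hsymm hsim2)
  have key : Sim adj (x, s) (t, x) := Sim_trans h1 h2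
  -- triangle lemma, apex t over the class of (x,s)
  have conc := tri hsymm t (p₀ := x) (q₀ := s) hxs (pE_swap hsymm hxt) (pE_swap hsymm hst)
    (fun hcon => L5 hcon) (fun hcon => L2 (Sim_swap' hsymm (Sim_symm hsymm hcon))) key
  exact absurd rfl conc.1.1

lemma END (hsymm : Symmetric adj) {s t u v : V} {a b : V × V}
    (hsim1 : Sim adj (u, v) a) (j : Jump adj s t a b) (hsim2 : Sim adj b (v, u)) :
    False := by
  obtain j | j | j | j := j
  · exact END_core hsymm hsim1 j hsim2
  · exact END_core hsymm hsim1 j hsim2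
  · exact END_core hsymm (Sim_swap hsymm hsim1) j (by simpa using Sim_swap hsymm hsim2)
  · exact END_core hsymm (Sim_swap hsymm hsim1) j (by simpa using Sim_swap hsymm hsim2)

/-- The graph `H - Â` seen from `G`'s side: add the removed complement edges back
to the adjacency. -/
def radj (adj : V → V → Prop) (s t : V) : V → V → Prop :=
  fun u v => adj u v ∨ Sim adj (s, t) (u, v) ∨ Sim adj (s, t) (v, u)

lemma radj_symm (hsymm : Symmetric adj) {s t : V} : Symmetric (radj adj s t) := by
  intro u v h
  obtain h | h | h := h
  · exact Or.inl (hsymm h)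
  · exact Or.inr (Or.inr h)
  · exact Or.inr (Or.inl h)

lemma pE_radj {s t : V} {p : V × V} (h : pE (radj adj s t) p) :
    pE adj p ∧ ¬ Sim adj (s, t) p ∧ ¬ Sim adj (s, t) p.swap := by
  refine ⟨⟨h.1, fun a => h.2 (Or.inl a)⟩, fun a => h.2 (Or.inr (Or.inl ?_)),
    fun a => h.2 (Or.inr (Or.inr ?_))⟩
  · exact a
  · exact a

/-- Canonicalization of a jump via the triangle lemma. -/
lemma canonR (hsymm : Symmetric adj) {s t x y y' : V} (hst : pE adj (s, t))
    (hp : pE adj (x, y)) (hq : pE adj (x, y'))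
    (hpa : ¬ Sim adj (s, t) (x, y)) (hpa' : ¬ Sim adj (s, t) (y, x))
    (hqa : ¬ Sim adj (s, t) (x, y')) (hqa' : ¬ Sim adj (s, t) (y', x))
    (hyy : Sim adj (s, t) (y, y')) (hBC : ¬ Sim adj (x, y) (x, y')) :
    JR adj s t (x, s) (x, t) ∧ Sim adj (x, y) (x, s) ∧ Sim adj (x, t) (x, y') := by
  have hE : pE adj (y, y') := Sim_pE hyy hst
  have conc := tri hsymm x (p₀ := y) (q₀ := y') hE hp hq
    (fun hcon => hpa' (Sim_trans hyy hcon))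
    (fun hcon => hqa (Sim_trans hyy hcon))
    (Sim_symm hsymm hyy)
  obtain ⟨hxs, hxt, hs1, hs2⟩ := conc
  have l1 : ¬ Sim adj (s, t) (x, s) :=
    fun hcon => hpa (Sim_trans hcon (Sim_symm hsymm hs1))
  have l2 : ¬ Sim adj (s, t) (s, x) := fun hcon =>
    hpa' (Sim_trans hcon (Sim_symm hsymm (Sim_swap' hsymm hs1)))
  have l3 : ¬ Sim adj (s, t) (x, t) :=
    fun hcon => hqa (Sim_trans hcon (Sim_symm hsymm hs2))
  have l4 : ¬ Sim adj (s, t) (t, x) := fun hcon =>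
    hqa' (Sim_trans hcon (Sim_symm hsymm (Sim_swap' hsymm hs2)))
  have l5 : ¬ Sim adj (x, s) (x, t) := fun hcon =>
    hBC (Sim_trans (Sim_trans hs1 hcon) (Sim_symm hsymm hs2))
  exact ⟨⟨x, rfl, rfl, hst, hxs, hxt, l1, l2, l3, l4, l5⟩, hs1, Sim_symm hsymm hs2⟩

lemma step_decomp_snd (hsymm : Symmetric adj) {s t x y y' : V} (hst : pE adj (s, t))
    (hp' : pE (radj adj s t) (x, y)) (hq' : pE (radj adj s t) (x, y'))
    (hne : ¬ pE (radj adj s t) (y, y')) :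
    Sim adj (x, y) (x, y') ∨
      ∃ a b, Sim adj (x, y) a ∧ Jump adj s t a b ∧ Sim adj b (x, y') := by
  obtain ⟨hp, hpa, hpa'⟩ := pE_radj hp'
  obtain ⟨hq, hqa, hqa'⟩ := pE_radj hq'
  by_cases hE2 : pE adj (y, y')
  · -- a removed edge between y and y'
    have hyy : Sim adj (s, t) (y, y') ∨ Sim adj (s, t) (y', y) := by
      by_contra hcon
      push_neg at hcon
      refine hne ⟨hE2.1, ?_⟩
      rintro (h | h | h)
      · exact hE2.2 h
      · exact hcon.1 h
      · exact hcon.2 h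
    by_cases hBC : Sim adj (x, y) (x, y')
    · exact Or.inl hBC
    · right
      obtain hyy | hyy := hyy
      · obtain ⟨jr, hsa, hsb⟩ := canonR hsymm hst hp hq hpa hpa' hqa hqa' hyy hBC
        exact ⟨(x, s), (x, t), hsa, Or.inl jr, hsb⟩
      · have hyy2 : Sim adj (t, s) (y, y') := Sim_swap' hsymm hyy
        have hst2 : pE adj (t, s) := pE_swap hsymm hst
        have w1 : ¬ Sim adj (t, s) (x, y) := fun c => hpa' (Sim_swap' hsymm c)
        have w2 : ¬ Sim adj (t, s) (y, x) := fun c => hpa (Sim_swap' hsymm c)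
        have w3 : ¬ Sim adj (t, s) (x, y') := fun c => hqa' (Sim_swap' hsymm c)
        have w4 : ¬ Sim adj (t, s) (y', x) := fun c => hqa (Sim_swap' hsymm c)
        obtain ⟨jr, hsa, hsb⟩ := canonR hsymm hst2 hp hq w1 w2 w3 w4 hyy2 hBC
        exact ⟨(x, t), (x, s), hsa, Or.inr (Or.inl jr), hsb⟩
  · -- ordinary forcing step
    exact Or.inl (ReflTransGen.single ⟨hp, hq, Or.inl ⟨rfl, hE2⟩⟩)

lemma step_decomp (hsymm : Symmetric adj) {s t : V} (hst : pE adj (s, t)) {p q : V × V}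
    (h : Lam (radj adj s t) p q) :
    Sim adj p q ∨ ∃ a b, Sim adj p a ∧ Jump adj s t a b ∧ Sim adj b q := by
  obtain ⟨p1, p2⟩ := p
  obtain ⟨q1, q2⟩ := q
  obtain ⟨hp', hq', hcase | hcase⟩ := h
  · obtain ⟨heq, hne⟩ := hcase
    simp only at heq
    subst heq
    exact step_decomp_snd hsymm hst hp' hq' hne
  · obtain ⟨heq, hne⟩ := hcase
    simp only at heq
    subst heq
    have hp'' : pE (radj adj s t) (p2, p1) := pE_swap (radj_symm hsymm) hp'
    have hq'' : pE (radj adj s t) (p2, q1) := pE_swap (radj_symm hsymm) hq'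
    obtain hres | ⟨a, b, h1, h2, h3⟩ := step_decomp_snd hsymm hst hp'' hq'' hne
    · exact Or.inl (Sim_swap' hsymm hres)
    · refine Or.inr ⟨a.swap, b.swap, ?_, Jump_swap h2, ?_⟩
      · have := Sim_swap hsymm h1; simpa using this
      · have := Sim_swap hsymm h3; simpa using this

/-- Chains with `n` jumps. -/
def SimJ (adj : V → V → Prop) (s t : V) : ℕ → V × V → V × V → Prop
  | 0 => Sim adj
  | (n + 1) => fun p q => ∃ a b, SimJ adj s t n p a ∧ Jump adj s t a b ∧ Sim adj b q

lemma SimJ_extend {s t : V} {n : ℕ} {p q r : V × V} (h : SimJ adj s t n p q)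
    (h' : Sim adj q r) : SimJ adj s t n p r := by
  cases n with
  | zero => exact Sim_trans h h'
  | succ m =>
    obtain ⟨a, b, h1, h2, h3⟩ := h
    exact ⟨a, b, h1, h2, Sim_trans h3 h'⟩

lemma sim_radj_to_SimJ (hsymm : Symmetric adj) {s t : V} (hst : pE adj (s, t))
    {p q : V × V} (h : Sim (radj adj s t) p q) : ∃ n, SimJ adj s t n p q := by
  induction h with
  | refl => exact ⟨0, ReflTransGen.refl⟩
  | tail _ hstep ih =>
    obtain ⟨n, hn⟩ := ih
    obtain hres | ⟨a, b, h1, h2, h3⟩ := step_decomp hsymm hst hstep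
    · exact ⟨n, SimJ_extend hn hres⟩
    · exact ⟨n + 1, a, b, SimJ_extend hn h1, h2, h3⟩

def NoInv (adj : V → V → Prop) : Prop :=
  ∀ u v : V, pE adj (u, v) → ¬ Sim adj (u, v) (v, u)

lemma noinv_SimJ (hsymm : Symmetric adj) (hni : NoInv adj) {s t : V} {u v : V}
    (hpe : pE adj (u, v)) : ∀ n, ¬ SimJ adj s t n (u, v) (v, u) := by
  intro n
  induction n using Nat.strong_induction_on with
  | _ n ih =>
    match n with
    | 0 => exact hni u v hpe
    | 1 =>
      rintro ⟨a, b, h1, h2, h3⟩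
      exact END hsymm h1 h2 h3
    | (m + 2) =>
      rintro ⟨a2, b2, ⟨a1, b1, h0, j1, hs1⟩, j2, hs2⟩
      have hc : Sim adj a1 b2 := ADJACENT hsymm j1 hs1 j2
      exact ih m (by omega) (SimJ_extend (SimJ_extend h0 hc) hs2)

lemma NoInv_radj (hsymm : Symmetric adj) (hni : NoInv adj) {s t : V} (hst : pE adj (s, t)) :
    NoInv (radj adj s t) := by
  intro u v hpe' hsim'
  obtain ⟨n, hn⟩ := sim_radj_to_SimJ hsymm hst hsim'
  exact noinv_SimJ hsymm hni (pE_radj hpe').1 n hn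

lemma InA_trans (hsymm : Symmetric adj) (hni : NoInv adj) {s t a b c : V}
    (hst : pE adj (s, t)) (h1 : Sim adj (s, t) (a, b)) (h2 : Sim adj (s, t) (b, c)) :
    Sim adj (s, t) (a, c) := by
  have hab : pE adj (a, b) := Sim_pE h1 hst
  have hbc : pE adj (b, c) := Sim_pE h2 hst
  have hE_ac : pE adj (a, c) := by
    by_contra hnac
    have hstep : Lam adj (b, c) (b, a) :=
      ⟨hbc, pE_swap hsymm hab, Or.inl ⟨rfl, fun hca => hnac (pE_swap hsymm hca)⟩⟩
    have hba : Sim adj (s, t) (b, a) := h2.tail hstep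
    exact hni a b hab (Sim_trans (Sim_symm hsymm h1) hba)
  by_cases hgoal : Sim adj (b, c) (a, c)
  · exact Sim_trans h2 hgoal
  · exfalso
    have conc := tri hsymm a (p₀ := b) (q₀ := c) hbc hab hE_ac
      (fun hcon => hni a b hab (Sim_trans (Sim_symm hsymm h1) (Sim_trans h2 hcon)))
      hgoal (Sim_trans (Sim_symm hsymm h2) h1)
    exact absurd rfl conc.1.1

def IsTRO (adj : V → V → Prop) (F : V → V → Prop) : Prop :=
  (∀ u v, F u v → pE adj (u, v)) ∧ (∀ u v, pE adj (u, v) → (F u v ↔ ¬ F v u)) ∧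
    (∀ a b c, F a b → F b c → F a c)

lemma TRO_closed (hsymm : Symmetric adj) {F : V → V → Prop} (h : IsTRO adj F)
    {p q : V × V} (hl : Lam adj p q) (hf : F p.1 p.2) : F q.1 q.2 := by
  obtain ⟨p1, p2⟩ := p
  obtain ⟨q1, q2⟩ := q
  obtain ⟨hpE, hqE, hcase | hcase⟩ := hl <;> obtain ⟨heq, hne⟩ := hcase <;>
    simp only at heq ⊢ <;> subst heq <;> simp only at hf
  · by_contra hcon
    have h2 : F q2 p1 := by
      have := (h.2.1 p1 q2 hqE)
      tauto
    have h3 : F q2 p2 := h.2.2 _ _ _ h2 hf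
    exact hne (pE_swap hsymm (h.1 _ _ h3))
  · by_contra hcon
    have h2 : F p2 q1 := by
      have := (h.2.1 q1 p2 hqE)
      tauto
    have h3 : F p1 q1 := h.2.2 _ _ _ hf h2
    exact hne (h.1 _ _ h3)

lemma exists_TRO_aux [Fintype V] :
    ∀ (n : ℕ) (adj : V → V → Prop), Symmetric adj → NoInv adj →
      Set.ncard {p : V × V | pE adj p} ≤ n → ∃ F, IsTRO adj F := by
  intro n
  induction n with
  | zero =>
    intro adj hsymm hni hcard
    refine ⟨fun _ _ => False, fun u v h => h.elim, fun u v hpe => ?_, fun a b c h => h.elim⟩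
    exfalso
    have : ({p : V × V | pE adj p}).Nonempty := ⟨(u, v), hpe⟩
    have := Set.ncard_pos (s := {p : V × V | pE adj p}) (Set.toFinite _) |>.2 this
    omega
  | succ n ih =>
    intro adj hsymm hni hcard
    by_cases hex : ∃ st : V × V, pE adj st
    · obtain ⟨⟨s, t⟩, hst⟩ := hex
      set adj2 := radj adj s t with hadj2
      have hsym2 : Symmetric adj2 := radj_symm hsymm
      have hni2 : NoInv adj2 := NoInv_radj hsymm hni hst
      have hss : {p : V × V | pE adj2 p} ⊂ {p : V × V | pE adj p} := by
        constructor
        · intro p hp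
          exact (pE_radj hp).1
        · intro hcon
          have : pE adj2 (s, t) := hcon hst
          exact this.2 (Or.inr (Or.inl ReflTransGen.refl))
      have hlt := Set.ncard_lt_ncard hss (Set.toFinite _)
      obtain ⟨F', hF'⟩ := ih adj2 hsym2 hni2 (by omega)
      refine ⟨fun u v => F' u v ∨ Sim adj (s, t) (u, v), ?_, ?_, ?_⟩
      · rintro u v (h | h)
        · exact (pE_radj (hF'.1 _ _ h)).1
        · exact Sim_pE h hst
      · intro u v hpe
        by_cases h1 : Sim adj (s, t) (u, v) <;> by_cases h2 : Sim adj (s, t) (v, u)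
        · exact absurd (Sim_trans (Sim_symm hsymm h1) h2) (hni u v hpe)
        · constructor
          · rintro - (hf | hf)
            · exact (pE_radj (hF'.1 _ _ hf)).2.2 h1
            · exact h2 hf
          · intro _; exact Or.inr h1
        · constructor
          · rintro (hf | hf)
            · exact absurd h2 (pE_radj (hF'.1 _ _ hf)).2.2
            · exact absurd hf h1
          · intro hcon; exact absurd (fun _ => Or.inr h2) (by tauto)
        · have hpe2 : pE adj2 (u, v) := by
            refine ⟨hpe.1, ?_⟩
            rintro (h | h | h)
            · exact hpe.2 h
            · exact h1 h
            · exact h2 h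
          have := hF'.2.1 u v hpe2
          constructor
          · rintro (hf | hf) (hg | hg)
            · exact (this.1 hf) hg
            · exact h2 hg
            · exact h1 hf
            · exact h1 hf
          · intro hcon
            left
            refine this.2 (fun hg => hcon (Or.inl hg))
      · rintro a b c (hab | hab) (hbc | hbc)
        · exact Or.inl (hF'.2.2 _ _ _ hab hbc)
        · -- F' a b , A b c
          have hpe_ab2 : pE adj2 (a, b) := hF'.1 _ _ hab
          have hpe_ab : pE adj (a, b) := (pE_radj hpe_ab2).1
          have hpe_bc : pE adj (b, c) := Sim_pE hbc hst
          have hE_ac : pE adj (a, c) := by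
            by_contra hnac
            have hstep : Lam adj (b, c) (b, a) :=
              ⟨hpe_bc, pE_swap hsymm hpe_ab,
                Or.inl ⟨rfl, fun hca => hnac (pE_swap hsymm hca)⟩⟩
            exact (pE_radj hpe_ab2).2.2 (hbc.tail hstep)
          by_cases hIac : Sim adj (s, t) (a, c)
          · exact Or.inr hIac
          by_cases hIca : Sim adj (s, t) (c, a)
          · exfalso
            exact (pE_radj hpe_ab2).2.2 (InA_trans hsymm hni hst hbc hIca)
          · left
            have hpe_ac2 : pE adj2 (a, c) := by
              refine ⟨hE_ac.1, ?_⟩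
              rintro (h | h | h)
              · exact hE_ac.2 h
              · exact hIac h
              · exact hIca h
            have hstep : Lam adj2 (a, b) (a, c) := by
              refine ⟨hpe_ab2, hpe_ac2, Or.inl ⟨rfl, ?_⟩⟩
              intro hcon
              exact hcon.2 (Or.inr (Or.inl hbc))
            exact TRO_closed hsym2 hF' hstep hab
        · -- A a b , F' b c
          have hpe_bc2 : pE adj2 (b, c) := hF'.1 _ _ hbc
          have hpe_bc : pE adj (b, c) := (pE_radj hpe_bc2).1
          have hpe_ab : pE adj (a, b) := Sim_pE hab hst
          have hE_ac : pE adj (a, c) := by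
            by_contra hnac
            have hstep : Lam adj (a, b) (c, b) :=
              ⟨hpe_ab, pE_swap hsymm hpe_bc, Or.inr ⟨rfl, hnac⟩⟩
            exact (pE_radj hpe_bc2).2.2 (hab.tail hstep)
          by_cases hIac : Sim adj (s, t) (a, c)
          · exact Or.inr hIac
          by_cases hIca : Sim adj (s, t) (c, a)
          · exfalso
            exact (pE_radj hpe_bc2).2.2 (InA_trans hsymm hni hst hIca hab)
          · left
            have hpe_ac2 : pE adj2 (a, c) := by
              refine ⟨hE_ac.1, ?_⟩
              rintro (h | h | h)
              · exact hE_ac.2 h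
              · exact hIac h
              · exact hIca h
            have hstep : Lam adj2 (b, c) (a, c) := by
              refine ⟨hpe_bc2, hpe_ac2, Or.inr ⟨rfl, ?_⟩⟩
              intro hcon
              exact hcon.2 (Or.inr (Or.inr hab))
            exact TRO_closed hsym2 hF' hstep hbc
        · exact Or.inr (InA_trans hsymm hni hst hab hbc)
    · refine ⟨fun _ _ => False, fun u v h => h.elim, fun u v hpe => ?_, fun a b c h => h.elim⟩
      exact absurd ⟨(u, v), hpe⟩ hex

lemma exists_TRO [Fintype V] (hsymm : Symmetric adj) (hni : NoInv adj) :
    ∃ F, IsTRO adj F :=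
  exists_TRO_aux (Set.ncard {p : V × V | pE adj p}) adj hsymm hni le_rfl

lemma extend1 {N : ℕ} {W : ℕ → V} (z : V)
    (hE : ∀ i ≤ N, pE adj (W i, W (i+1))) (hN : ∀ i < N, ¬ pE adj (W i, W (i+2)))
    (hz1 : pE adj (W (N+1), z)) (hz2 : ¬ pE adj (W N, z)) :
    ∃ W' : ℕ → V, (∀ i ≤ N+1, W' i = W i) ∧ W' (N+2) = z ∧
      (∀ i ≤ N+1, pE adj (W' i, W' (i+1))) ∧ (∀ i < N+1, ¬ pE adj (W' i, W' (i+2))) := by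
  refine ⟨fun n => if n = N+2 then z else W n, ?_, by simp, ?_, ?_⟩
  · intro i hi; simp only [if_neg (show i ≠ N+2 by omega)]
  · intro i hi
    rcases eq_or_lt_of_le hi with rfl | hi'
    · simpa [if_neg (show N+1 ≠ N+2 by omega)] using hz1
    · simp only [if_neg (show i ≠ N+2 by omega), if_neg (show i+1 ≠ N+2 by omega)]
      exact hE i (by omega)
  · intro i hi
    rcases eq_or_lt_of_le (Nat.lt_succ_iff.mp hi) with heq | hi'
    · rw [heq]; simpa [if_neg (show N ≠ N+2 by omega)] using hz2
    · simp only [if_neg (show i ≠ N+2 by omega), if_neg (show i+2 ≠ N+2 by omega)]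
      exact hN i (by omega)

lemma ghchain (hsymm : Symmetric adj) {p q : V × V} (h : Sim adj p q) (hp : pE adj p) :
    ∃ (N : ℕ) (W : ℕ → V), W 0 = p.1 ∧ W 1 = p.2 ∧
      ((Even N ∧ W N = q.1 ∧ W (N+1) = q.2) ∨ (¬ Even N ∧ W N = q.2 ∧ W (N+1) = q.1)) ∧
      (∀ i ≤ N, pE adj (W i, W (i+1))) ∧
      (∀ i < N, ¬ pE adj (W i, W (i+2))) := by
  induction h with
  | refl =>
    refine ⟨0, fun n => if n = 0 then p.1 else p.2, by simp, by simp, ?_, ?_, fun i hi => absurd hi (by omega)⟩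
    · exact Or.inl ⟨Even.zero, by simp, by simp⟩
    · intro i hi
      interval_cases i
      simpa using hp
  | @tail b c hb hbc ih =>
    obtain ⟨N, W, h0, h1, hor, hE, hN⟩ := ih
    have hcE : pE adj c := hbc.2.1
    -- possibly insert an identity step to adjust parity
    obtain ⟨hmove, hne⟩ | ⟨hmove, hne⟩ := hbc.2.2
    · -- second coordinate moves; need odd orientation (W N = b.2, W (N+1) = b.1)
      have key : ∀ (M : ℕ) (W₀ : ℕ → V), W₀ 0 = p.1 → W₀ 1 = p.2 →
          ¬ Even M → W₀ M = b.2 → W₀ (M+1) = b.1 →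
          (∀ i ≤ M, pE adj (W₀ i, W₀ (i+1))) → (∀ i < M, ¬ pE adj (W₀ i, W₀ (i+2))) →
          ∃ (N' : ℕ) (W' : ℕ → V), W' 0 = p.1 ∧ W' 1 = p.2 ∧
            ((Even N' ∧ W' N' = c.1 ∧ W' (N'+1) = c.2) ∨
              (¬ Even N' ∧ W' N' = c.2 ∧ W' (N'+1) = c.1)) ∧
            (∀ i ≤ N', pE adj (W' i, W' (i+1))) ∧
            (∀ i < N', ¬ pE adj (W' i, W' (i+2))) := by
        intro M W₀ g0 g1 godd gM gM1 gE gN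
        obtain ⟨W', e1, e2, e3, e4⟩ := extend1 (adj := adj) c.2 gE gN
          (by rw [gM1, hmove]; exact hcE) (by rw [gM]; exact hne)
        refine ⟨M+1, W', by rw [e1 0 (by omega)]; exact g0,
          by rw [e1 1 (by omega)]; exact g1, ?_, e3, e4⟩
        exact Or.inl ⟨Nat.even_add_one.mpr godd, by rw [e1 (M+1) le_rfl, gM1, hmove], e2⟩
      obtain ⟨hev, hb1, hb2⟩ | ⟨hodd, hb1, hb2⟩ := hor
      · -- even : insert identity step first
        obtain ⟨W', e1, e2, e3, e4⟩ := extend1 (adj := adj) (W N) hE hN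
          (pE_swap hsymm (hE N le_rfl)) (fun hcon => hcon.1 rfl)
        refine key (N+1) W' (by rw [e1 0 (by omega)]; exact h0)
          (by rw [e1 1 (by omega)]; exact h1) (fun hcon => (Nat.even_add_one.mp hcon) hev)
          (by rw [e1 (N+1) le_rfl]; exact hb2) (by rw [e2]; exact hb1) e3 e4
      · exact key N W h0 h1 hodd hb1 hb2 hE hN
    · -- first coordinate moves; need even orientation (W N = b.1, W (N+1) = b.2)
      have key : ∀ (M : ℕ) (W₀ : ℕ → V), W₀ 0 = p.1 → W₀ 1 = p.2 →
          Even M → W₀ M = b.1 → W₀ (M+1) = b.2 →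
          (∀ i ≤ M, pE adj (W₀ i, W₀ (i+1))) → (∀ i < M, ¬ pE adj (W₀ i, W₀ (i+2))) →
          ∃ (N' : ℕ) (W' : ℕ → V), W' 0 = p.1 ∧ W' 1 = p.2 ∧
            ((Even N' ∧ W' N' = c.1 ∧ W' (N'+1) = c.2) ∨
              (¬ Even N' ∧ W' N' = c.2 ∧ W' (N'+1) = c.1)) ∧
            (∀ i ≤ N', pE adj (W' i, W' (i+1))) ∧
            (∀ i < N', ¬ pE adj (W' i, W' (i+2))) := by
        intro M W₀ g0 g1 gev gM gM1 gE gN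
        obtain ⟨W', e1, e2, e3, e4⟩ := extend1 (adj := adj) c.1 gE gN
          (by rw [gM1, hmove]; exact pE_swap hsymm hcE) (by rw [gM]; exact hne)
        refine ⟨M+1, W', by rw [e1 0 (by omega)]; exact g0,
          by rw [e1 1 (by omega)]; exact g1, ?_, e3, e4⟩
        exact Or.inr ⟨fun hcon => (Nat.even_add_one.mp hcon) gev, by rw [e1 (M+1) le_rfl, gM1, hmove], e2⟩
      obtain ⟨hev, hb1, hb2⟩ | ⟨hodd, hb1, hb2⟩ := hor
      · exact key N W h0 h1 hev hb1 hb2 hE hN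
      · -- odd : insert identity step first
        obtain ⟨W', e1, e2, e3, e4⟩ := extend1 (adj := adj) (W N) hE hN
          (pE_swap hsymm (hE N le_rfl)) (fun hcon => hcon.1 rfl)
        refine key (N+1) W' (by rw [e1 0 (by omega)]; exact h0)
          (by rw [e1 1 (by omega)]; exact h1) (Nat.even_add_one.mpr hodd)
          (by rw [e1 (N+1) le_rfl]; exact hb2) (by rw [e2]; exact hb1) e3 e4



lemma inv_to_asteroid {adj : V → V → Prop} (hsymm : Symmetric adj) (hrefl : Reflexive adj)
    {u v : V} (hpe : pE adj (u, v)) (h : Sim adj (u, v) (v, u)) :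
    ∃ (k : ℕ) (x : ZMod (2*k+1) → V), Asteroid adj k x := by
  obtain ⟨N, W, h0, h1, hor, hE, hN⟩ := ghchain hsymm h hpe
  simp only at h0 h1 hor
  obtain ⟨N, W, hodd, h0, h1, hNu, hNv, hE, hN⟩ :
      ∃ (N : ℕ) (W : ℕ → V), ¬ Even N ∧ W 0 = u ∧ W 1 = v ∧ W N = u ∧ W (N+1) = v ∧
        (∀ i ≤ N, pE adj (W i, W (i+1))) ∧ (∀ i < N, ¬ pE adj (W i, W (i+2))) := by
    obtain ⟨hev, hq1, hq2⟩ | ⟨hodd, hq1, hq2⟩ := hor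
    · obtain ⟨W', e1, e2, e3, e4⟩ := extend1 (adj := adj) (W N) hE hN
        (pE_swap hsymm (hE N le_rfl)) (fun hc => hc.1 rfl)
      exact ⟨N+1, W', fun hc => (Nat.even_add_one.mp hc) hev,
        by rw [e1 0 (by omega)]; exact h0, by rw [e1 1 (by omega)]; exact h1,
        by rw [e1 (N+1) le_rfl]; exact hq2, by rw [e2]; exact hq1, e3, e4⟩
    · exact ⟨N, W, hodd, h0, h1, hq1, hq2, hE, hN⟩
  obtain ⟨k, hk⟩ : Odd N := Nat.odd_iff.mpr (by
    rcases Nat.even_or_odd N with he | ho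
    · exact absurd he hodd
    · exact Nat.odd_iff.mp ho)
  subst hk
  -- rule out the degenerate length-1 chain
  rcases Nat.eq_zero_or_pos k with rfl | hk1
  · exfalso
    have h2 := hE 1 le_rfl
    have hv2 : W 2 = v := by simpa using hNv
    norm_num at h2
    rw [h1, hv2] at h2
    exact h2.1 rfl
  set M := 2*k+1 with hM
  haveI : NeZero M := ⟨by omega⟩
  have hM3 : 3 ≤ M := by omega
  have key0 : W M = W 0 := by rw [hNu, h0]
  have key1 : W (M+1) = W 1 := by rw [hNv, h1]
  -- cyclic (mod M) versions of the chain conditions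
  have nz1 : ∀ m : ℕ, pE adj (W (m % M + 1), W ((m+1) % M + 1)) := by
    intro m
    have hr : m % M < M := Nat.mod_lt _ (by omega)
    have e : (m+1) % M = (m % M + 1) % M := by
      rw [Nat.add_mod, Nat.mod_eq_of_lt (show 1 < M by omega)]
    rcases eq_or_lt_of_le (show m % M + 1 ≤ M by omega) with heq | hlt
    · rw [e, heq, Nat.mod_self]
      have := hE M le_rfl
      rw [key1] at this
      simpa using this
    · rw [e, Nat.mod_eq_of_lt hlt]
      exact hE (m % M + 1) (by omega)
  have nz2 : ∀ m : ℕ, ¬ pE adj (W (m % M + 1), W ((m+2) % M + 1)) := by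
    intro m
    have hr : m % M < M := Nat.mod_lt _ (by omega)
    have e : (m+2) % M = (m % M + 2) % M := by
      rw [Nat.add_mod, Nat.mod_eq_of_lt (show 2 < M by omega)]
    rcases lt_trichotomy (m % M + 2) M with hlt | heq | hgt
    · rw [e, Nat.mod_eq_of_lt hlt]
      exact hN (m % M + 1) (by omega)
    · rw [e, heq, Nat.mod_self]
      have := hN (M-1) (by omega)
      rw [show M - 1 + 2 = M + 1 by omega, key1] at this
      have e2 : m % M = M - 2 := by omega
      rw [e2, show M - 2 + 1 = M - 1 by omega]
      exact this
    · have e2 : m % M = M - 1 := by omega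
      have e3 : (m % M + 2) % M = 1 := by
        rw [e2, show M - 1 + 2 = M + 1 by omega]
        rw [Nat.add_mod, Nat.mod_self]
        simp [Nat.mod_eq_of_lt (show 1 < M by omega)]
      rw [e, e3, e2, show M - 1 + 1 = M by omega, key0]
      exact hN 0 (by omega)
  -- pass to ZMod M
  set z : ZMod M → V := fun j => W (j.val + 1) with hz
  have hjval : ∀ (m : ℕ), ((m : ZMod M)).val = m % M := fun m => ZMod.val_natCast M m
  have zpE : ∀ j : ZMod M, pE adj (z j, z (j+1)) := by
    intro j
    have hj : ((j.val : ℕ) : ZMod M) = j := ZMod.natCast_rightInverse j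
    have e1 : z j = W (j.val % M + 1) := by
      rw [hz]; simp only
      rw [Nat.mod_eq_of_lt (ZMod.val_lt j)]
    have e2 : z (j + 1) = W ((j.val + 1) % M + 1) := by
      rw [hz]; simp only
      have : j + 1 = ((j.val + 1 : ℕ) : ZMod M) := by push_cast [hj]; ring
      rw [this, hjval]
    rw [e1, e2]
    exact nz1 j.val
  have zpN : ∀ j : ZMod M, ¬ pE adj (z j, z (j+2)) := by
    intro j
    have hj : ((j.val : ℕ) : ZMod M) = j := ZMod.natCast_rightInverse j
    have e1 : z j = W (j.val % M + 1) := by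
      rw [hz]; simp only
      rw [Nat.mod_eq_of_lt (ZMod.val_lt j)]
    have e2 : z (j + 2) = W ((j.val + 2) % M + 1) := by
      rw [hz]; simp only
      have : j + 2 = ((j.val + 2 : ℕ) : ZMod M) := by push_cast [hj]; ring
      rw [this, hjval]
    rw [e1, e2]
    exact nz2 j.val
  -- the asteroid
  have hZ : ((2*k+1 : ℕ) : ZMod M) = 0 := by
    rw [hM]; exact ZMod.natCast_self _
  have hZ' : 2 * ((k : ℕ) : ZMod M) + 1 = 0 := by push_cast at hZ; linear_combination hZ
  refine ⟨k, fun i => z (2 * i), ?_⟩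
  intro i
  have e1 : (2 : ZMod M) * (i + (k : ZMod M)) = 2 * i - 1 := by linear_combination hZ'
  have e2 : (2 : ZMod M) * (i + (k : ZMod M) + 1) = 2 * i + 1 := by linear_combination hZ'
  have f1 : pE adj (z (2*i), z (2*i + 1)) := zpE (2*i)
  have f2 : pE adj (z (2*i - 1), z (2*i)) := by
    have := zpE (2*i - 1)
    rwa [show 2*i - 1 + 1 = 2*i by ring] at this
  have f3 : ¬ pE adj (z (2*i - 1), z (2*i + 1)) := by
    have := zpN (2*i - 1)
    rwa [show 2*i - 1 + 2 = 2*i + 1 by ring] at this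
  refine ⟨1, fun n => if n = 0 then z (2*i - 1) else z (2*i + 1), by simp [e1], ?_, ?_, ?_⟩
  · simp only [if_neg (one_ne_zero)]
    rw [e2]
  · intro j hj
    interval_cases j
    simp only [if_pos rfl, if_neg one_ne_zero]
    by_cases hab : z (2*i - 1) = z (2*i + 1)
    · rw [hab]; exact hrefl _
    · by_contra hcon
      exact f3 ⟨hab, hcon⟩
  · intro j hj
    interval_cases j
    · simp only [if_pos rfl]
      exact fun hadj => f2.2 (hsymm hadj)
    · simp only [if_neg one_ne_zero]
      exact f1.2


lemma noInv_isCocomp [Fintype V] {adj : V → V → Prop} (hsymm : Symmetric adj)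
    (hni : NoInv adj) : IsCocomp adj := by
  obtain ⟨F, hF1, hF2, hF3⟩ := exists_TRO hsymm hni
  let r : V → V → Prop := fun a b => F a b ∨ a = b
  haveI hpo : IsPartialOrder V r :=
    { refl := fun a => Or.inr rfl
      trans := by
        rintro a b c (hab | rfl) (hbc | rfl)
        · exact Or.inl (hF3 _ _ _ hab hbc)
        · exact Or.inl hab
        · exact Or.inl hbc
        · exact Or.inr rfl
      antisymm := by
        rintro a b (hab | rfl) (hba | hba)
        · exact absurd hba ((hF2 a b (hF1 _ _ hab)).1 hab)
        · exact hba.symm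
        · rfl
        · rfl }
  obtain ⟨so, hso, hsub⟩ := extend_partialOrder r
  haveI := hso
  refine ⟨fun a b => so a b ∧ a ≠ b,
    { trichotomous := ?_, irrefl := fun a h => h.2 rfl,
      trans := fun a b c h1 h2 => ⟨IsTrans.trans (r := so) _ _ _ h1.1 h2.1, by
          rintro rfl
          exact h1.2 (Std.Antisymm.antisymm (r := so) _ _ h1.1 h2.1)⟩ }, ?_⟩
  · intro a b hn1 hn2
    by_contra hab
    · rcases Std.Total.total (r := so) a b with hs | hs
      · exact hn1 ⟨hs, hab⟩
      · exact hn2 ⟨hs, Ne.symm hab⟩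
  · intro a b c h1 h2 hadj
    by_contra hcon
    push_neg at hcon
    have hab : pE adj (a, b) := ⟨h1.2, hcon.1⟩
    have hbc : pE adj (b, c) := ⟨h2.2, hcon.2⟩
    have hfab : F a b := by
      by_contra hnab
      have : F b a := by
        have := hF2 a b hab
        tauto
      have : so b a := hsub b a (Or.inl this)
      exact h1.2 (Std.Antisymm.antisymm (r := so) _ _ h1.1 this)
    have hfbc : F b c := by
      by_contra hnbc
      have : F c b := by
        have := hF2 b c hbc
        tauto
      have : so c b := hsub c b (Or.inl this)
      exact h2.2 (Std.Antisymm.antisymm (r := so) _ _ h2.1 this)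
    exact (hF1 _ _ (hF3 _ _ _ hfab hfbc)).2 hadj

lemma no_asteroid_noInv {adj : V → V → Prop} (hsymm : Symmetric adj) (hrefl : Reflexive adj)
    (hna : ¬ ∃ (k : ℕ) (x : ZMod (2*k+1) → V), Asteroid adj k x) : NoInv adj :=
  fun _ _ hpe hsim => hna (inv_to_asteroid hsymm hrefl hpe hsim)


lemma cocomp_no_asteroid {adj : V → V → Prop} (hsymm : Symmetric adj) (hrefl : Reflexive adj)
    (hco : IsCocomp adj) : ¬ ∃ (k : ℕ) (x : ZMod (2*k+1) → V), Asteroid adj k x := by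
  rintro ⟨k, x, hast⟩
  obtain ⟨lt, hsto, hcc⟩ := hco
  haveI := hsto
  -- abstract crossing lemma
  have cross : ∀ (lt' : V → V → Prop), (∀ a b c, lt' a b → lt' b c → lt' a c) →
      (∀ a b c, lt' a b → lt' b c → adj a c → adj a b ∨ adj b c) →
      (∀ a b, lt' a b → lt' b a → False) →
      (∀ a b : V, a ≠ b → lt' a b ∨ lt' b a) →
      ∀ (c : V) (t : ℕ) (w : ℕ → V), IsWalkOn adj t w → (∀ j ≤ t, ¬ adj c (w j)) →
        lt' (w 0) c → lt' c (w t) → False := by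
    intro lt' htr hcc' hasym htot c t
    induction t with
    | zero => exact fun w _ _ h1 h2 => hasym _ _ h1 h2
    | succ t ih =>
      intro w hw havd h1 h2
      by_cases heq : w t = c
      · exact havd t (by omega) (heq ▸ hrefl c)
      rcases htot (w t) c heq with hlt | hgt
      · rcases hcc' (w t) c (w (t+1)) hlt h2 (hw t (by omega)) with ha | ha
        · exact havd t (by omega) (hsymm ha)
        · exact havd (t+1) le_rfl ha
      · exact ih w (fun i hi => hw i (by omega)) (fun j hj => havd j (by omega)) h1 hgt
  have htr : ∀ a b c, lt a b → lt b c → lt a c := fun a b c h1 h2 =>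
    IsTrans.trans (r := lt) a b c h1 h2
  have hasym : ∀ a b, lt a b → lt b a → False := fun a b h1 h2 =>
    absurd (htr a b a h1 h2) (Std.Irrefl.irrefl (r := lt) a)
  have htot : ∀ a b : V, a ≠ b → lt a b ∨ lt b a := by
    intro a b hne
    rcases trichotomous_of lt a b with h | h | h
    · exact Or.inl h
    · exact absurd h hne
    · exact Or.inr h
  -- the four properties at each index
  have hprop : ∀ i : ZMod (2*k+1),
      ¬ adj (x i) (x (i + (k : ZMod (2*k+1)))) ∧
      ¬ adj (x i) (x (i + (k : ZMod (2*k+1)) + 1)) ∧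
      ¬ (lt (x (i + (k : ZMod (2*k+1)))) (x i) ∧
          lt (x i) (x (i + (k : ZMod (2*k+1)) + 1))) ∧
      ¬ (lt (x (i + (k : ZMod (2*k+1)) + 1)) (x i) ∧
          lt (x i) (x (i + (k : ZMod (2*k+1))))) := by
    intro i
    obtain ⟨t, w, hw0, hwt, hwalk, havd⟩ := hast i
    refine ⟨hw0 ▸ havd 0 (by omega), hwt ▸ havd t le_rfl, ?_, ?_⟩
    · rintro ⟨hl1, hl2⟩
      exact cross lt htr hcc hasym htot (x i) t w hwalk havd (hw0 ▸ hl1) (hwt ▸ hl2)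
    · rintro ⟨hl1, hl2⟩
      refine cross (fun a b => lt b a) (fun a b c h1 h2 => htr c b a h2 h1)
        (fun a b c h1 h2 hadj => by
          rcases hcc c b a h2 h1 (hsymm hadj) with h | h
          exacts [Or.inr (hsymm h), Or.inl (hsymm h)])
        (fun a b h1 h2 => hasym a b h2 h1) (fun a b hne => (htot a b hne).symm)
        (x i) t w hwalk havd (hw0 ▸ hl2) (hwt ▸ hl1)
  -- reindex so that antipodal pairs become neighbours
  have hZ : ((2*k+1 : ℕ) : ZMod (2*k+1)) = 0 := ZMod.natCast_self _
  have hZ' : 2 * ((k : ℕ) : ZMod (2*k+1)) + 1 = 0 := by push_cast at hZ; linear_combination hZ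
  set κ : ZMod (2*k+1) := (k : ZMod (2*k+1)) + 1 with hκ
  set y : ZMod (2*k+1) → V := fun j => x (κ * j) with hy
  have idx1 : ∀ j : ZMod (2*k+1), κ * j + (k : ZMod (2*k+1)) = κ * (j - 1) := by
    intro j; rw [hκ]; ring_nf; linear_combination hZ'
  have idx2 : ∀ j : ZMod (2*k+1), κ * j + (k : ZMod (2*k+1)) + 1 = κ * (j + 1) := by
    intro j; rw [hκ]; ring
  have hyp : ∀ j : ZMod (2*k+1),
      ¬ adj (y j) (y (j-1)) ∧ ¬ adj (y j) (y (j+1)) ∧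
      ¬ (lt (y (j-1)) (y j) ∧ lt (y j) (y (j+1))) ∧
      ¬ (lt (y (j+1)) (y j) ∧ lt (y j) (y (j-1))) := by
    intro j
    have := hprop (κ * j)
    rwa [idx2 j, idx1 j] at this
  have hne1 : ∀ j : ZMod (2*k+1), y j ≠ y (j+1) := by
    intro j hcon
    exact (hyp j).2.1 (hcon ▸ hrefl (y j))
  have dstep : ∀ j : ZMod (2*k+1), lt (y (j+1)) (y (j+2)) ↔ ¬ lt (y j) (y (j+1)) := by
    intro j
    have hcur := hyp (j+1)
    rw [show j + 1 - 1 = j by ring, show j + 1 + 1 = j + 2 by ring] at hcur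
    constructor
    · intro h1 h2
      exact hcur.2.2.1 ⟨h2, h1⟩
    · intro h2
      have hlt : lt (y (j+1)) (y j) := by
        rcases htot (y j) (y (j+1)) (hne1 j) with h | h
        · exact absurd h h2
        · exact h
      have hne2 : y (j+1) ≠ y (j+2) := by
        have := hne1 (j+1); rwa [show j+1+1 = j+2 by ring] at this
      rcases htot (y (j+1)) (y (j+2)) hne2 with h | h
      · exact h
      · exact absurd ⟨h, hlt⟩ hcur.2.2.2
  -- parity contradiction around the odd cycle
  have hkey : ∀ n : ℕ, lt (y (n : ZMod (2*k+1))) (y ((n : ZMod (2*k+1)) + 1)) ↔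
      (Even n ↔ lt (y 0) (y 1)) := by
    intro n
    induction n with
    | zero => simp
    | succ n ih =>
      have hc : ((n+1 : ℕ) : ZMod (2*k+1)) = (n : ZMod (2*k+1)) + 1 := by push_cast; ring
      rw [hc, show (n : ZMod (2*k+1)) + 1 + 1 = (n : ZMod (2*k+1)) + 2 by ring,
        dstep (n : ZMod (2*k+1)), ih, Nat.even_add_one]
      tauto
  have hfin := hkey (2*k+1)
  rw [hZ] at hfin
  simp only [zero_add] at hfin
  have : ¬ Even (2*k+1) := by simp [Nat.even_add_one, Nat.even_mul]
  tauto

end Gallai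

/-- **Theorem (Gallai, Statement 16).** A reflexive graph is a cocomparability graph if
and only if it does not contain an asteroid. -/
theorem isCocomp_iff_no_asteroid
    {V : Type*} [Fintype V] (adj : V → V → Prop)
    (hsymm : Symmetric adj) (hrefl : Reflexive adj) :
    IsCocomp adj ↔ ¬ ∃ (k : ℕ) (x : ZMod (2*k+1) → V), Asteroid adj k x := by
  constructor
  · exact Gallai.cocomp_no_asteroid hsymm hrefl
  · intro hna
    exact Gallai.noInv_isCocomp hsymm (Gallai.no_asteroid_noInv hsymm hrefl hna)
end
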